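/- arXiv:0704.1343 — 6 statements merged into one kernel-verified Lean document; each statement's English description precedes it below -/
import Mathlib

section
/- Let γ>0, m,k≥1, Q=m+(1+γ)k, and ρ(x,y)=(|x|^{2(1+γ)}+(1+γ)²|y|²)^{1/(2(1+γ))}. If f∈C²(0,∞) and u(z)=f(ρ(z)), then the Baouendi-Grushin Laplacian satisfies Δ_γ u(z) = (|x|^{2γ}/ρ(z)^{2γ})·(f''(ρ(z)) + ((Q-1)/ρ(z))·f'(ρ(z))) for all z=(x,y) with ρ(z)≠0 and x≠0. -/
open MeasureTheory Real RealInnerProductSpace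

/-- The product space `ℝ^m × ℝ^k` for the Baouendi-Grushin setting. -/
abbrev GSp (m k : ℕ) := EuclideanSpace ℝ (Fin m) × EuclideanSpace ℝ (Fin k)

/-- The Baouendi-Grushin gauge `ρ(x,y) = (|x|^{2(1+γ)} + (1+γ)²|y|²)^{1/(2(1+γ))}`. -/
noncomputable def grho (γ : ℝ) {m k : ℕ} (z : GSp m k) : ℝ :=
  (‖z.1‖ ^ (2 * (1 + γ)) + (1 + γ) ^ 2 * ‖z.2‖ ^ 2) ^ (1 / (2 * (1 + γ)))

/-- Squared norm of the Baouendi-Grushin gradient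
`|∇_γ φ|² = |∇_x φ|² + |x|^{2γ} |∇_y φ|²`. -/
noncomputable def ggradSq (γ : ℝ) {m k : ℕ} (φ : GSp m k → ℝ) (z : GSp m k) : ℝ :=
  (∑ i, (fderiv ℝ φ z (EuclideanSpace.single i (1:ℝ), 0)) ^ 2)
  + ‖z.1‖ ^ (2 * γ) * ∑ j, (fderiv ℝ φ z (0, EuclideanSpace.single j (1:ℝ))) ^ 2

/-- The Baouendi-Grushin operator `Δ_γ φ = Δ_x φ + |x|^{2γ} Δ_y φ`. -/
noncomputable def glap (γ : ℝ) {m k : ℕ} (φ : GSp m k → ℝ) (z : GSp m k) : ℝ :=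
  (∑ i, fderiv ℝ (fun w => fderiv ℝ φ w (EuclideanSpace.single i (1:ℝ), 0)) z
      (EuclideanSpace.single i (1:ℝ), 0))
  + ‖z.1‖ ^ (2 * γ) * ∑ j, fderiv ℝ (fun w => fderiv ℝ φ w (0, EuclideanSpace.single j (1:ℝ))) z
      (0, EuclideanSpace.single j (1:ℝ))


lemma inner_self_rpow {E : Type*} [NormedAddCommGroup E] [InnerProductSpace ℝ E] (x : E) (c : ℝ) :
    (⟪x, x⟫) ^ c = ‖x‖ ^ (2 * c) := by
  rw [real_inner_self_eq_norm_sq, ← Real.rpow_natCast ‖x‖ 2, ← Real.rpow_mul (norm_nonneg x)]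
  norm_num

noncomputable def gL (γ : ℝ) {m k : ℕ} (w : GSp m k) : GSp m k →L[ℝ] ℝ :=
  (‖w.1‖ ^ (2*γ)) • ((innerSL ℝ w.1).comp (ContinuousLinearMap.fst ℝ _ _))
  + (1+γ) • ((innerSL ℝ w.2).comp (ContinuousLinearMap.snd ℝ _ _))

lemma gL_apply (γ : ℝ) {m k : ℕ} (w v : GSp m k) :
    gL γ w v = ‖w.1‖ ^ (2*γ) * ⟪w.1, v.1⟫ + (1+γ) * ⟪w.2, v.2⟫ := by
  simp [gL]

lemma key0 {γ : ℝ} {m k : ℕ} {w : GSp m k} (hγ : 0 < γ) (hw : w.1 ≠ 0) :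
    HasFDerivAt (grho γ (m := m) (k := k))
      ((grho γ w ^ (1 - 2 * (1 + γ))) • gL γ w) w := by
  have hγ1 : (0:ℝ) < 1 + γ := by linarith
  have hα : (2 * (1 + γ)) ≠ 0 := by positivity
  have hxn : 0 < ‖w.1‖ := norm_pos_iff.mpr hw
  have hx : 0 < ⟪w.1, w.1⟫ := by
    rw [real_inner_self_eq_norm_sq]; positivity
  have h1 : HasFDerivAt (fun p : GSp m k => ⟪p.1, p.1⟫)
      ((fderivInnerCLM ℝ (w.1, w.1)).comp
        ((ContinuousLinearMap.fst ℝ _ _).prod (ContinuousLinearMap.fst ℝ _ _))) w :=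
    (hasFDerivAt_fst).inner ℝ (hasFDerivAt_fst)
  have h2 := (Real.hasDerivAt_rpow_const (x := ⟪w.1, w.1⟫) (p := 1+γ)
      (Or.inl hx.ne')).comp_hasFDerivAt w h1
  have h1y : HasFDerivAt (fun p : GSp m k => ⟪p.2, p.2⟫)
      ((fderivInnerCLM ℝ (w.2, w.2)).comp
        ((ContinuousLinearMap.snd ℝ _ _).prod (ContinuousLinearMap.snd ℝ _ _))) w :=
    (hasFDerivAt_snd).inner ℝ (hasFDerivAt_snd)
  have h3 := h1y.const_mul ((1+γ)^2)
  have h4 := h2.add h3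
  have hS0 : (0:ℝ) < ⟪w.1, w.1⟫ ^ (1+γ) + (1+γ)^2 * ⟪w.2, w.2⟫ := by
    have h5 : (0:ℝ) ≤ ⟪w.2, w.2⟫ := real_inner_self_nonneg
    have := Real.rpow_pos_of_pos hx (1+γ)
    nlinarith
  have h5 := (Real.hasDerivAt_rpow_const
      (x := ⟪w.1, w.1⟫ ^ (1+γ) + (1+γ)^2 * ⟪w.2, w.2⟫) (p := 1/(2*(1+γ)))
      (Or.inl hS0.ne')).comp_hasFDerivAt w h4
  have hfun : grho γ (m := m) (k := k)
      = fun p => (⟪p.1, p.1⟫ ^ (1+γ) + (1+γ)^2 * ⟪p.2, p.2⟫) ^ (1/(2*(1+γ))) := by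
    funext p
    rw [grho, inner_self_rpow, real_inner_self_eq_norm_sq]
  rw [hfun]
  refine h5.congr_fderiv ?_
  symm
  refine ContinuousLinearMap.ext fun v => ?_
  have e1 : (1:ℝ) + γ - 1 = γ := by ring
  have hSn : ⟪w.1, w.1⟫ ^ (1+γ) + (1+γ)^2 * ⟪w.2, w.2⟫
      = ‖w.1‖ ^ (2*(1+γ)) + (1+γ)^2 * ‖w.2‖^2 := by
    rw [inner_self_rpow, real_inner_self_eq_norm_sq]
  have hSpos : (0:ℝ) < ‖w.1‖ ^ (2*(1+γ)) + (1+γ)^2 * ‖w.2‖^2 := hSn ▸ hS0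
  have hρ1α : grho γ w ^ (1 - 2*(1+γ))
      = (‖w.1‖ ^ (2*(1+γ)) + (1+γ)^2 * ‖w.2‖^2) ^ (1/(2*(1+γ)) - 1) := by
    rw [grho, ← Real.rpow_mul hSpos.le]
    congr 1
    field_simp
  simp only [ContinuousLinearMap.smul_apply, ContinuousLinearMap.comp_apply,
    ContinuousLinearMap.add_apply, ContinuousLinearMap.prod_apply,
    ContinuousLinearMap.coe_fst', ContinuousLinearMap.coe_snd',
    fderivInnerCLM_apply, gL_apply, smul_eq_mul]
  rw [real_inner_comm v.1 w.1, real_inner_comm v.2 w.2, e1, inner_self_rpow w.1 γ, hSn]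
  rw [show ((‖w.1‖ ^ (2*(1+γ)) + (1+γ)^2 * ‖w.2‖^2) ^ (1/(2*(1+γ)))) ^ (1 - 2*(1+γ))
      = (‖w.1‖ ^ (2*(1+γ)) + (1+γ)^2 * ‖w.2‖^2) ^ (1/(2*(1+γ)) - 1) by
    rw [← Real.rpow_mul hSpos.le]; congr 1; field_simp]
  field_simp
  ring

lemma keyN {γ : ℝ} {m k : ℕ} {w : GSp m k} (hw : w.1 ≠ 0) :
    HasFDerivAt (fun p : GSp m k => ‖p.1‖ ^ (2*γ))
      ((2*γ*‖w.1‖^(2*γ-2)) •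
        ((innerSL ℝ w.1).comp (ContinuousLinearMap.fst ℝ _ _))) w := by
  have hx : 0 < ⟪w.1, w.1⟫ := by
    rw [real_inner_self_eq_norm_sq]
    have : 0 < ‖w.1‖ := norm_pos_iff.mpr hw
    positivity
  have h1 : HasFDerivAt (fun p : GSp m k => ⟪p.1, p.1⟫)
      ((fderivInnerCLM ℝ (w.1, w.1)).comp
        ((ContinuousLinearMap.fst ℝ _ _).prod (ContinuousLinearMap.fst ℝ _ _))) w :=
    (hasFDerivAt_fst).inner ℝ (hasFDerivAt_fst)
  have h2 := (Real.hasDerivAt_rpow_const (x := ⟪w.1, w.1⟫) (p := γ)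
      (Or.inl hx.ne')).comp_hasFDerivAt w h1
  have hfun : (fun p : GSp m k => ‖p.1‖ ^ (2*γ)) = fun p => ⟪p.1, p.1⟫ ^ γ := by
    funext p; rw [inner_self_rpow]
  rw [hfun]
  refine h2.congr_fderiv ?_
  symm
  refine ContinuousLinearMap.ext fun v => ?_
  simp only [ContinuousLinearMap.smul_apply, ContinuousLinearMap.comp_apply,
    ContinuousLinearMap.add_apply, ContinuousLinearMap.prod_apply,
    ContinuousLinearMap.coe_fst', fderivInnerCLM_apply, innerSL_apply_apply, smul_eq_mul]
  rw [real_inner_comm v.1 w.1, inner_self_rpow w.1 (γ-1),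
    show 2*(γ-1) = 2*γ-2 by ring]
  ring

lemma keyC1 {m k : ℕ} (a : EuclideanSpace ℝ (Fin m)) (w : GSp m k) :
    HasFDerivAt (fun p : GSp m k => ⟪p.1, a⟫)
      ((innerSL ℝ a).comp (ContinuousLinearMap.fst ℝ _ _)) w := by
  have : (fun p : GSp m k => ⟪p.1, a⟫)
      = fun p => ((innerSL ℝ a).comp (ContinuousLinearMap.fst ℝ _ _)) p := by
    funext p; simp [mul_comm]; exact real_inner_comm _ _
  rw [this]
  exact ((innerSL ℝ a).comp
    (ContinuousLinearMap.fst ℝ (EuclideanSpace ℝ (Fin m)) (EuclideanSpace ℝ (Fin k)))).hasFDerivAt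

lemma keyC2 {m k : ℕ} (a : EuclideanSpace ℝ (Fin k)) (w : GSp m k) :
    HasFDerivAt (fun p : GSp m k => ⟪p.2, a⟫)
      ((innerSL ℝ a).comp (ContinuousLinearMap.snd ℝ _ _)) w := by
  have : (fun p : GSp m k => ⟪p.2, a⟫)
      = fun p => ((innerSL ℝ a).comp (ContinuousLinearMap.snd ℝ _ _)) p := by
    funext p; simp [mul_comm]; exact real_inner_comm _ _
  rw [this]
  exact ((innerSL ℝ a).comp
    (ContinuousLinearMap.snd ℝ (EuclideanSpace ℝ (Fin m)) (EuclideanSpace ℝ (Fin k)))).hasFDerivAt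

lemma key2 {γ : ℝ} (hγ : 0 < γ) {m k : ℕ} (f : ℝ → ℝ) (hf : ContDiffOn ℝ 2 f (Set.Ioi 0))
    {z : GSp m k} (hx : z.1 ≠ 0) (v : GSp m k) :
    fderiv ℝ (fun w => fderiv ℝ (fun w' => f (grho γ w')) w v) z v
      = ((deriv (deriv f) (grho γ z) * grho γ z ^ (1-2*(1+γ))
          + deriv f (grho γ z) * (1-2*(1+γ)) * grho γ z ^ (1-2*(1+γ)-1))
          * grho γ z ^ (1-2*(1+γ)))
          * (‖z.1‖^(2*γ) * ⟪z.1,v.1⟫ + (1+γ) * ⟪z.2,v.2⟫)^2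
        + (deriv f (grho γ z) * grho γ z ^ (1-2*(1+γ)))
          * (2*γ*‖z.1‖^(2*γ-2)*⟪z.1,v.1⟫^2 + ‖z.1‖^(2*γ)*⟪v.1,v.1⟫
             + (1+γ)*⟪v.2,v.2⟫) := by
  have hγ1 : (0:ℝ) < 1 + γ := by linarith
  have hU : IsOpen {w : GSp m k | w.1 ≠ 0} :=
    isOpen_compl_singleton.preimage continuous_fst
  have hρpos : ∀ w : GSp m k, w.1 ≠ 0 → 0 < grho γ w := by
    intro w hw
    have hn : 0 < ‖w.1‖ := norm_pos_iff.mpr hw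
    have hS : 0 < ‖w.1‖ ^ (2*(1+γ)) + (1+γ)^2 * ‖w.2‖^2 := by
      have := Real.rpow_pos_of_pos hn (2*(1+γ))
      positivity
    exact Real.rpow_pos_of_pos hS _
  have hfd : ∀ w : GSp m k, w.1 ≠ 0 →
      HasFDerivAt (fun w' => f (grho γ w'))
        ((deriv f (grho γ w)) • ((grho γ w ^ (1-2*(1+γ))) • gL γ w)) w := by
    intro w hw
    have hdf : HasDerivAt f (deriv f (grho γ w)) (grho γ w) :=
      ((hf.contDiffAt (isOpen_Ioi.mem_nhds (hρpos w hw))).differentiableAt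
        two_ne_zero).hasDerivAt
    exact hdf.comp_hasFDerivAt w (key0 hγ hw)
  have hev : (fun w => fderiv ℝ (fun w' => f (grho γ w')) w v) =ᶠ[nhds z]
      (fun w => deriv f (grho γ w) * (grho γ w ^ (1-2*(1+γ))
        * (‖w.1‖^(2*γ) * ⟪w.1,v.1⟫ + (1+γ) * ⟪w.2,v.2⟫))) := by
    filter_upwards [hU.mem_nhds hx] with w hw
    rw [(hfd w hw).fderiv]
    simp [gL_apply, mul_assoc]
  rw [hev.fderiv_eq]
  -- derivatives of the three factors at z
  have hdf2 : HasDerivAt (deriv f) (deriv (deriv f) (grho γ z)) (grho γ z) := by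
    have h2 : ContDiffOn ℝ 1 (deriv f) (Set.Ioi 0) :=
      hf.deriv_of_isOpen isOpen_Ioi (by norm_num)
    exact ((h2.contDiffAt (isOpen_Ioi.mem_nhds (hρpos z hx))).differentiableAt
      one_ne_zero).hasDerivAt
  have hA : HasFDerivAt (fun w => deriv f (grho γ w))
      ((deriv (deriv f) (grho γ z)) • ((grho γ z ^ (1-2*(1+γ))) • gL γ z)) z :=
    hdf2.comp_hasFDerivAt z (key0 hγ hx)
  have hB : HasFDerivAt (fun w => grho γ w ^ (1-2*(1+γ)))
      (((1-2*(1+γ)) * grho γ z ^ (1-2*(1+γ)-1)) • ((grho γ z ^ (1-2*(1+γ))) • gL γ z)) z :=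
    (Real.hasDerivAt_rpow_const (Or.inl (hρpos z hx).ne')).comp_hasFDerivAt z (key0 hγ hx)
  have hΦ := ((keyN (γ := γ) hx).mul (keyC1 v.1 z)).add ((keyC2 v.2 z).const_mul (1+γ))
  have htot := hA.mul (hB.mul hΦ)
  rw [(show HasFDerivAt (fun w => deriv f (grho γ w) * (grho γ w ^ (1-2*(1+γ))
      * (‖w.1‖^(2*γ) * ⟪w.1,v.1⟫ + (1+γ) * ⟪w.2,v.2⟫))) _ z from htot).fderiv]
  simp only [ContinuousLinearMap.add_apply, ContinuousLinearMap.smul_apply,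
    ContinuousLinearMap.comp_apply, ContinuousLinearMap.coe_fst',
    ContinuousLinearMap.coe_snd', gL_apply, innerSL_apply_apply, smul_eq_mul, Pi.mul_apply, Pi.add_apply]
  ring

/-- radial formula for the Baouendi-Grushin Laplacian. -/
theorem stmt1 (γ : ℝ) (hγ : 0 < γ) (m k : ℕ) (hm : 1 ≤ m) (hk : 1 ≤ k)
    (Q : ℝ) (hQ : Q = (m : ℝ) + (1 + γ) * k)
    (f : ℝ → ℝ) (hf : ContDiffOn ℝ 2 f (Set.Ioi (0:ℝ)))
    (z : GSp m k) (hz : grho γ z ≠ 0) (hx : z.1 ≠ 0) :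
    glap γ (fun w => f (grho γ w)) z
      = (‖z.1‖ ^ (2 * γ) / (grho γ z) ^ (2 * γ)) *
        (deriv (deriv f) (grho γ z) + (Q - 1) / grho γ z * deriv f (grho γ z)) := by
  have hγ1 : (0:ℝ) < 1 + γ := by linarith
  have hα : (2*(1+γ)) ≠ 0 := by positivity
  have hN : 0 < ‖z.1‖ := norm_pos_iff.mpr hx
  have hS : 0 < ‖z.1‖^(2*(1+γ)) + (1+γ)^2*‖z.2‖^2 := by
    have := Real.rpow_pos_of_pos hN (2*(1+γ))
    positivity
  have hρ : 0 < grho γ z := Real.rpow_pos_of_pos hS _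
  have hραS : grho γ z ^ (2*(1+γ)) = ‖z.1‖^(2*(1+γ)) + (1+γ)^2*‖z.2‖^2 := by
    rw [grho, ← Real.rpow_mul hS.le, one_div, inv_mul_cancel₀ hα, Real.rpow_one]
  have hsq : ‖z.1‖^(2:ℝ) = ‖z.1‖^2 := by
    rw [← Real.rpow_natCast ‖z.1‖ 2]; norm_num
  have h1 : grho γ z ^ (1-2*(1+γ))
      = grho γ z / (‖z.1‖^(2*(1+γ)) + (1+γ)^2*‖z.2‖^2) := by
    rw [show (1:ℝ)-2*(1+γ) = 1 + (-(2*(1+γ))) by ring, Real.rpow_add hρ, Real.rpow_one,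
      Real.rpow_neg hρ.le, hραS, div_eq_mul_inv]
  have h2 : grho γ z ^ (1-2*(1+γ)-1)
      = 1 / (‖z.1‖^(2*(1+γ)) + (1+γ)^2*‖z.2‖^2) := by
    rw [show (1:ℝ)-2*(1+γ)-1 = -(2*(1+γ)) by ring, Real.rpow_neg hρ.le, hραS, one_div]
  have h3 : ‖z.1‖^(2*γ) = ‖z.1‖^(2*(1+γ)) / ‖z.1‖^2 := by
    rw [show (2*γ) = 2*(1+γ) - 2 by ring, Real.rpow_sub hN, hsq]
  have h4 : ‖z.1‖^(2*γ-2) = ‖z.1‖^(2*(1+γ)) / (‖z.1‖^2 * ‖z.1‖^2) := by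
    rw [show (2*γ-2) = 2*(1+γ) - (2+2) by ring, Real.rpow_sub hN, Real.rpow_add hN, hsq]
  have h5 : grho γ z ^ (2*γ) = (‖z.1‖^(2*(1+γ)) + (1+γ)^2*‖z.2‖^2) / grho γ z^2 := by
    rw [show (2*γ) = 2*(1+γ) - 2 by ring, Real.rpow_sub hρ, hραS,
      ← Real.rpow_natCast (grho γ z) 2]; norm_num
  have hs1 : ∑ i, (z.1 i)^2 = ‖z.1‖^2 := by
    rw [← real_inner_self_eq_norm_sq, PiLp.inner_apply]
    simp [sq]
  have hs2 : ∑ j, (z.2 j)^2 = ‖z.2‖^2 := by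
    rw [← real_inner_self_eq_norm_sq, PiLp.inner_apply]
    simp [sq]
  unfold glap
  simp only [key2 hγ f hf hx]
  simp only [EuclideanSpace.inner_single_right, EuclideanSpace.inner_single_left,
    inner_zero_right, inner_zero_left, EuclideanSpace.single_apply, conj_trivial,
    map_one, one_mul, mul_one, mul_zero, zero_mul, add_zero, zero_add, if_pos rfl]
  simp only [ite_true, ne_eq, OfNat.ofNat_ne_zero, not_false_eq_true, zero_pow, mul_zero, add_zero, zero_add, mul_one]
  simp only [mul_pow, Finset.sum_add_distrib, ← Finset.mul_sum, Finset.sum_const,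
    Finset.card_univ, Fintype.card_fin, nsmul_eq_mul, hs1, hs2]
  rw [h1, h2, h3, h4, h5, hQ]
  have hNe : (‖z.1‖:ℝ) ≠ 0 := hN.ne'
  have hSe : (‖z.1‖^(2*(1+γ)) + (1+γ)^2*‖z.2‖^2) ≠ 0 := hS.ne'
  have hρe : grho γ z ≠ 0 := hρ.ne'
  field_simp
  ring
end

section
/- Let γ>0, m,k≥1, Q=m+(1+γ)k, α∈ℝ, and ρ(x,y)=(|x|^{2(1+γ)}+(1+γ)²|y|²)^{1/(2(1+γ))}. Then for z=(x,y) with ρ(z)≠0 and x≠0, Δ_γ(ρ^{α-2})(z) = (Q+α-4)(α-2)·ρ(z)^{α-4}·|∇_γ ρ(z)|², where |∇_γ ρ| = |x|^γ/ρ^γ. -/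
open MeasureTheory Real

section aux
variable {m k : ℕ}

noncomputable def gsf (w : GSp m k) : ℝ := ∑ i, (w.1 i)^2
noncomputable def gtf (w : GSp m k) : ℝ := ∑ j, (w.2 j)^2
noncomputable def guf (γ : ℝ) (w : GSp m k) : ℝ := gsf w ^ (1+γ) + (1+γ)^2 * gtf w

noncomputable def cX (i : Fin m) : GSp m k →L[ℝ] ℝ :=
  (EuclideanSpace.proj i).comp (ContinuousLinearMap.fst ℝ _ _)
noncomputable def cY (j : Fin k) : GSp m k →L[ℝ] ℝ :=
  (EuclideanSpace.proj j).comp (ContinuousLinearMap.snd ℝ _ _)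

noncomputable def SD (w : GSp m k) : GSp m k →L[ℝ] ℝ := ∑ i, (2 * w.1 i) • cX i
noncomputable def TD (w : GSp m k) : GSp m k →L[ℝ] ℝ := ∑ j, (2 * w.2 j) • cY j

@[simp] lemma cX_apply (i : Fin m) (v : GSp m k) : cX i v = v.1 i := rfl
@[simp] lemma cY_apply (j : Fin k) (v : GSp m k) : cY j v = v.2 j := rfl
@[simp] lemma SD_apply (w v : GSp m k) : SD w v = ∑ i, 2 * w.1 i * v.1 i := by
  simp [SD]
@[simp] lemma TD_apply (w v : GSp m k) : TD w v = ∑ j, 2 * w.2 j * v.2 j := by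
  simp [TD]

lemma hasS (w : GSp m k) : HasFDerivAt gsf (SD w) w := by
  have : ∀ i : Fin m, HasFDerivAt (fun w : GSp m k => (w.1 i)^2) ((2 * w.1 i) • cX i) w := by
    intro i
    have h : HasFDerivAt (fun w : GSp m k => cX i w * cX i w) (cX i w • cX i + cX i w • cX i) w :=
      ((cX (k := k) i).hasFDerivAt (x := w)).mul ((cX (k := k) i).hasFDerivAt (x := w))
    convert h using 1
    · ext v; simp [sq]
    · refine ContinuousLinearMap.ext fun v => ?_; simp [cX]; ring
  exact HasFDerivAt.fun_sum (fun i _ => this i)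

lemma hasT (w : GSp m k) : HasFDerivAt gtf (TD w) w := by
  have : ∀ j : Fin k, HasFDerivAt (fun w : GSp m k => (w.2 j)^2) ((2 * w.2 j) • cY j) w := by
    intro j
    have h : HasFDerivAt (fun w : GSp m k => cY j w * cY j w) (cY j w • cY j + cY j w • cY j) w :=
      ((cY (m := m) j).hasFDerivAt (x := w)).mul ((cY (m := m) j).hasFDerivAt (x := w))
    convert h using 1
    · ext v; simp [sq]
    · refine ContinuousLinearMap.ext fun v => ?_; simp [cY]; ring
  exact HasFDerivAt.fun_sum (fun j _ => this j)

end aux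

section aux2
variable {m k : ℕ}

noncomputable def UD (γ : ℝ) (w : GSp m k) : GSp m k →L[ℝ] ℝ :=
  ((1+γ) * gsf w ^ γ) • SD w + ((1+γ)^2 : ℝ) • TD w

noncomputable def gpsi (γ a b : ℝ) (w : GSp m k) : ℝ := gsf w ^ a * guf γ w ^ b

noncomputable def PD (γ a b : ℝ) (w : GSp m k) : GSp m k →L[ℝ] ℝ :=
  (a * gsf w ^ (a-1) * guf γ w ^ b
    + (1+γ) * b * gsf w ^ a * gsf w ^ γ * guf γ w ^ (b-1)) • SD w
  + ((1+γ)^2 * b * gsf w ^ a * guf γ w ^ (b-1)) • TD w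

lemma hasU (γ : ℝ) (w : GSp m k) (hs : gsf w ≠ 0) :
    HasFDerivAt (guf γ) (UD γ w) w := by
  have h1 : HasFDerivAt (fun w : GSp m k => gsf w ^ (1+γ))
      (((1+γ) * gsf w ^ (1+γ-1)) • SD w) w :=
    (hasDerivAt_rpow_const (p := 1+γ) (Or.inl hs)).comp_hasFDerivAt w (hasS w)
  have h2 : HasFDerivAt (fun w : GSp m k => (1+γ)^2 * gtf w) (((1+γ)^2 : ℝ) • TD w) w :=
    (hasT w).const_mul _
  have h := h1.add h2
  have e : (1:ℝ)+γ-1 = γ := by ring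
  rw [e] at h
  exact h

lemma hasUb (γ b : ℝ) (w : GSp m k) (hs : gsf w ≠ 0) (hu : guf γ w ≠ 0) :
    HasFDerivAt (fun w : GSp m k => guf γ w ^ b) ((b * guf γ w ^ (b-1)) • UD γ w) w :=
  (hasDerivAt_rpow_const (p := b) (Or.inl hu)).comp_hasFDerivAt w (hasU γ w hs)

lemma hasPsi (γ a b : ℝ) (w : GSp m k) (hs : gsf w ≠ 0) (hu : guf γ w ≠ 0) :
    HasFDerivAt (gpsi γ a b) (PD γ a b w) w := by
  have h1 : HasFDerivAt (fun w : GSp m k => gsf w ^ a) ((a * gsf w ^ (a-1)) • SD w) w :=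
    (hasDerivAt_rpow_const (p := a) (Or.inl hs)).comp_hasFDerivAt w (hasS w)
  have h : HasFDerivAt (fun w : GSp m k => gsf w ^ a * guf γ w ^ b)
      (gsf w ^ a • ((b * guf γ w ^ (b-1)) • UD γ w) + guf γ w ^ b • ((a * gsf w ^ (a-1)) • SD w)) w :=
    h1.mul (hasUb γ b w hs hu)
  refine h.congr_fderiv ?_
  refine ContinuousLinearMap.ext fun v => ?_
  simp [PD, UD]
  ring

@[simp] lemma SD_ex (w : GSp m k) (i : Fin m) :
    SD w (EuclideanSpace.single i (1:ℝ), 0) = 2 * w.1 i := by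
  simp [EuclideanSpace.single_apply]
@[simp] lemma SD_ey (w : GSp m k) (j : Fin k) :
    SD w ((0 : EuclideanSpace ℝ (Fin m)), EuclideanSpace.single j (1:ℝ)) = 0 := by
  simp
@[simp] lemma TD_ex (w : GSp m k) (i : Fin m) :
    TD w (EuclideanSpace.single i (1:ℝ), 0) = 0 := by
  simp
@[simp] lemma TD_ey (w : GSp m k) (j : Fin k) :
    TD w ((0 : EuclideanSpace ℝ (Fin m)), EuclideanSpace.single j (1:ℝ)) = 2 * w.2 j := by
  simp [EuclideanSpace.single_apply]

end aux2

section aux3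
variable {m k : ℕ}

lemma gsf_eq (w : GSp m k) : gsf w = ‖w.1‖^2 := by
  have h : (0:ℝ) ≤ ∑ i, ‖w.1 i‖^2 := by positivity
  rw [EuclideanSpace.norm_eq, Real.sq_sqrt h]
  simp [gsf, sq_abs]

lemma gtf_eq (w : GSp m k) : gtf w = ‖w.2‖^2 := by
  have h : (0:ℝ) ≤ ∑ j, ‖w.2 j‖^2 := by positivity
  rw [EuclideanSpace.norm_eq, Real.sq_sqrt h]
  simp [gtf, sq_abs]

lemma gsf_nonneg (w : GSp m k) : 0 ≤ gsf w := by unfold gsf; positivity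
lemma gtf_nonneg (w : GSp m k) : 0 ≤ gtf w := by unfold gtf; positivity
lemma guf_nonneg (γ : ℝ) (w : GSp m k) : 0 ≤ guf γ w := by
  have := gsf_nonneg w; have := gtf_nonneg w
  unfold guf; positivity

lemma guf_pos (γ : ℝ) (w : GSp m k) (hs : gsf w ≠ 0) : 0 < guf γ w := by
  have h1 : 0 < gsf w := lt_of_le_of_ne (gsf_nonneg w) (Ne.symm hs)
  have h2 : 0 < gsf w ^ (1+γ) := Real.rpow_pos_of_pos h1 _
  have := gtf_nonneg w
  unfold guf; nlinarith

lemma gsf_cont : Continuous (gsf (m := m) (k := k)) := by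
  have : (gsf (m := m) (k := k)) = fun w => ‖w.1‖^2 := funext gsf_eq
  rw [this]; exact (continuous_fst.norm.pow 2)

lemma hrpow2 (x : ℝ) (hx : 0 ≤ x) (c : ℝ) : x ^ (2 * c) = (x^2) ^ c := by
  rw [show (2:ℝ)*c = ((2:ℕ):ℝ)*c by norm_num, Real.rpow_mul hx, Real.rpow_natCast]

lemma norm1_rpow (w : GSp m k) (c : ℝ) : ‖w.1‖ ^ (2 * c) = gsf w ^ c := by
  rw [gsf_eq, ← hrpow2 _ (norm_nonneg _)]

lemma grho_eq (γ : ℝ) (w : GSp m k) : grho γ w = guf γ w ^ (1/(2*(1+γ))) := by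
  rw [grho, norm1_rpow w (1+γ), ← gtf_eq]
  rfl

end aux3

section aux4
variable {m k : ℕ}

lemma fderiv_phi (γ b : ℝ) (w : GSp m k) (hs : gsf w ≠ 0) :
    fderiv ℝ (fun w : GSp m k => guf γ w ^ b) w = (b * guf γ w ^ (b-1)) • UD γ w :=
  (hasUb γ b w hs (guf_pos γ w hs).ne').fderiv

lemma eventually_gsf (z : GSp m k) (hs : gsf z ≠ 0) : ∀ᶠ w in nhds z, gsf w ≠ 0 :=
  gsf_cont.continuousAt.eventually_ne hs

lemma second_x (γ β : ℝ) (z : GSp m k) (hs : gsf z ≠ 0) (i : Fin m) :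
    fderiv ℝ (fun w => fderiv ℝ (fun w : GSp m k => guf γ w ^ β) w
        (EuclideanSpace.single i (1:ℝ), 0)) z (EuclideanSpace.single i (1:ℝ), 0)
    = 2*β*(1+γ) * (gsf z ^ γ * guf γ z ^ (β-1)
        + z.1 i * ((γ * gsf z ^ (γ-1) * guf γ z ^ (β-1)
          + (1+γ)*(β-1) * gsf z ^ γ * gsf z ^ γ * guf γ z ^ (β-1-1)) * (2 * z.1 i))) := by
  have hu := (guf_pos γ z hs).ne'
  have hev : (fun w => (2*β*(1+γ)) * (gpsi γ γ (β-1) w * cX i w))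
      =ᶠ[nhds z] (fun w => fderiv ℝ (fun w : GSp m k => guf γ w ^ β) w
        (EuclideanSpace.single i (1:ℝ), 0)) := by
    filter_upwards [eventually_gsf z hs] with w hw
    rw [fderiv_phi γ β w hw]
    simp [gpsi, UD]
    ring
  rw [← hev.fderiv_eq]
  have hF := (((hasPsi γ γ (β-1) z hs hu).mul
    ((cX (k := k) i).hasFDerivAt (x := z))).const_mul (2*β*(1+γ)))
  rw [(show HasFDerivAt (fun w => 2*β*(1+γ) * (gpsi γ γ (β-1) w * cX i w)) _ z from hF).fderiv]
  simp [gpsi, PD, EuclideanSpace.single_apply]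
  ring

lemma second_y (γ β : ℝ) (z : GSp m k) (hs : gsf z ≠ 0) (j : Fin k) :
    fderiv ℝ (fun w => fderiv ℝ (fun w : GSp m k => guf γ w ^ β) w
        ((0 : EuclideanSpace ℝ (Fin m)), EuclideanSpace.single j (1:ℝ))) z
      ((0 : EuclideanSpace ℝ (Fin m)), EuclideanSpace.single j (1:ℝ))
    = 2*β*(1+γ)^2 * (guf γ z ^ (β-1)
        + z.2 j * (((1+γ)^2*(β-1) * guf γ z ^ (β-1-1)) * (2 * z.2 j))) := by
  have hu := (guf_pos γ z hs).ne'
  have hev : (fun w => (2*β*(1+γ)^2) * (gpsi γ 0 (β-1) w * cY j w))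
      =ᶠ[nhds z] (fun w => fderiv ℝ (fun w : GSp m k => guf γ w ^ β) w
        ((0 : EuclideanSpace ℝ (Fin m)), EuclideanSpace.single j (1:ℝ))) := by
    filter_upwards [eventually_gsf z hs] with w hw
    rw [fderiv_phi γ β w hw]
    simp [gpsi, UD]
    ring
  rw [← hev.fderiv_eq]
  have hF := (((hasPsi γ 0 (β-1) z hs hu).mul
    ((cY (m := m) j).hasFDerivAt (x := z))).const_mul (2*β*(1+γ)^2))
  rw [(show HasFDerivAt (fun w => 2*β*(1+γ)^2 * (gpsi γ 0 (β-1) w * cY j w)) _ z from hF).fderiv]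
  simp [gpsi, PD, EuclideanSpace.single_apply]
  ring

end aux4


/-- `Δ_γ(ρ^{α-2}) = (Q+α-4)(α-2) ρ^{α-4} |∇_γρ|²`. -/
theorem stmt2 (γ : ℝ) (hγ : 0 < γ) (m k : ℕ) (hm : 1 ≤ m) (hk : 1 ≤ k)
    (Q : ℝ) (hQ : Q = (m : ℝ) + (1 + γ) * k) (α : ℝ)
    (z : GSp m k) (hz : grho γ z ≠ 0) (hx : z.1 ≠ 0) :
    glap γ (fun w => grho γ w ^ (α - 2)) z
      = (Q + α - 4) * (α - 2) * grho γ z ^ (α - 4) * (‖z.1‖ ^ γ / grho γ z ^ γ) ^ 2 := by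
  have h1γ : (0:ℝ) < 1 + γ := by linarith
  have hz1 : ‖z.1‖ ≠ 0 := norm_ne_zero_iff.mpr hx
  have hSpos : 0 < gsf z := by rw [gsf_eq]; positivity
  have hS : gsf z ≠ 0 := hSpos.ne'
  have hUpos : 0 < guf γ z := guf_pos γ z hS
  have hU : guf γ z ≠ 0 := hUpos.ne'
  set β : ℝ := 1/(2*(1+γ)) * (α-2) with hβdef
  have hphi : (fun w : GSp m k => grho γ w ^ (α - 2)) = (fun w => guf γ w ^ β) := by
    funext w
    rw [grho_eq, ← Real.rpow_mul (guf_nonneg γ w), ← hβdef]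
  rw [hphi]
  simp only [glap]
  rw [Finset.sum_congr rfl fun i _ => second_x γ β z hS i,
      Finset.sum_congr rfl fun j _ => second_y γ β z hS j,
      norm1_rpow z γ]
  have hsum1 : ∑ i : Fin m, (2*β*(1+γ) * (gsf z ^ γ * guf γ z ^ (β-1)
        + z.1 i * ((γ * gsf z ^ (γ-1) * guf γ z ^ (β-1)
          + (1+γ)*(β-1) * gsf z ^ γ * gsf z ^ γ * guf γ z ^ (β-1-1)) * (2 * z.1 i))))
      = m * (2*β*(1+γ) * (gsf z ^ γ * guf γ z ^ (β-1)))
        + 4*β*(1+γ) * (γ * gsf z ^ (γ-1) * guf γ z ^ (β-1)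
          + (1+γ)*(β-1) * gsf z ^ γ * gsf z ^ γ * guf γ z ^ (β-1-1)) * gsf z := by
    have e : ∀ i : Fin m, (2*β*(1+γ) * (gsf z ^ γ * guf γ z ^ (β-1)
        + z.1 i * ((γ * gsf z ^ (γ-1) * guf γ z ^ (β-1)
          + (1+γ)*(β-1) * gsf z ^ γ * gsf z ^ γ * guf γ z ^ (β-1-1)) * (2 * z.1 i))))
        = (2*β*(1+γ) * (gsf z ^ γ * guf γ z ^ (β-1)))
          + (4*β*(1+γ) * (γ * gsf z ^ (γ-1) * guf γ z ^ (β-1)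
          + (1+γ)*(β-1) * gsf z ^ γ * gsf z ^ γ * guf γ z ^ (β-1-1))) * (z.1 i)^2 :=
      fun i => by ring
    rw [Finset.sum_congr rfl fun i _ => e i, Finset.sum_add_distrib, Finset.sum_const,
      ← Finset.mul_sum]
    simp only [Finset.card_univ, Fintype.card_fin, nsmul_eq_mul]
    show _ = _ + _ * gsf z
    rfl
  have hsum2 : ∑ j : Fin k, (2*β*(1+γ)^2 * (guf γ z ^ (β-1)
        + z.2 j * (((1+γ)^2*(β-1) * guf γ z ^ (β-1-1)) * (2 * z.2 j))))
      = k * (2*β*(1+γ)^2 * guf γ z ^ (β-1))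
        + 4*β*(1+γ)^4*(β-1) * guf γ z ^ (β-1-1) * gtf z := by
    have e : ∀ j : Fin k, (2*β*(1+γ)^2 * (guf γ z ^ (β-1)
        + z.2 j * (((1+γ)^2*(β-1) * guf γ z ^ (β-1-1)) * (2 * z.2 j))))
        = (2*β*(1+γ)^2 * guf γ z ^ (β-1))
          + (4*β*(1+γ)^4*(β-1) * guf γ z ^ (β-1-1)) * (z.2 j)^2 :=
      fun j => by ring
    rw [Finset.sum_congr rfl fun j _ => e j, Finset.sum_add_distrib, Finset.sum_const,
      ← Finset.mul_sum]
    simp only [Finset.card_univ, Fintype.card_fin, nsmul_eq_mul]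
    show _ = _ + _ * gtf z
    rfl
  rw [hsum1, hsum2]
  -- rewrite the right-hand side
  have hUc : guf γ z ^ (1/(2*(1+γ)) * γ) ≠ 0 := (Real.rpow_pos_of_pos hUpos _).ne'
  have hργ : grho γ z ^ γ = guf γ z ^ (1/(2*(1+γ)) * γ) := by
    rw [grho_eq, ← Real.rpow_mul (guf_nonneg γ z)]
  have exp_eq : 1/(2*(1+γ))*(α-4)
      = (β-1) + (1/(2*(1+γ))*γ + 1/(2*(1+γ))*γ) := by
    rw [hβdef]; field_simp; ring
  have hρα : grho γ z ^ (α-4) = guf γ z ^ (β-1)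
      * (guf γ z ^ (1/(2*(1+γ))*γ) * guf γ z ^ (1/(2*(1+γ))*γ)) := by
    rw [grho_eq, ← Real.rpow_mul (guf_nonneg γ z), exp_eq, Real.rpow_add hUpos,
      Real.rpow_add hUpos]
  have hnx : (‖z.1‖^γ)^2 = gsf z ^ γ := by
    rw [← Real.rpow_natCast (‖z.1‖^γ) 2, ← Real.rpow_mul (norm_nonneg _)]
    rw [show γ * ((2:ℕ):ℝ) = 2 * γ by push_cast; ring, norm1_rpow]
  have hRHS : (Q + α - 4) * (α - 2) * grho γ z ^ (α - 4) * (‖z.1‖ ^ γ / grho γ z ^ γ) ^ 2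
      = (Q + α - 4) * (α - 2) * (guf γ z ^ (β-1) * gsf z ^ γ) := by
    rw [div_pow, hnx, hργ, hρα]
    field_simp
  rw [hRHS]
  -- final algebra
  have hPS : gsf z ^ (γ-1) * gsf z = gsf z ^ γ := by
    rw [← Real.rpow_add_one hS (γ-1)]
    congr 1; ring
  have hWU : guf γ z ^ (β-1-1) * guf γ z = guf γ z ^ (β-1) := by
    rw [← Real.rpow_add_one hU (β-1-1)]
    congr 1; ring
  have hUd : gsf z ^ γ * gsf z + (1+γ)^2 * gtf z = guf γ z := by
    unfold guf
    rw [← Real.rpow_add_one hS γ]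
    congr 2; ring
  have hβrel : 2*(1+γ)*β = α-2 := by rw [hβdef]; field_simp
  linear_combination (4*β*(1+γ)*γ*(guf γ z ^ (β-1))) * hPS
    + (4*β*(1+γ)^2*(β-1)*(gsf z ^ γ)) * hWU
    + (4*β*(1+γ)^2*(β-1)*(gsf z ^ γ)*(guf γ z ^ (β-1-1))) * hUd
    + ((Q + 2*β*(1+γ) + α - 4)*(gsf z ^ γ)*(guf γ z ^ (β-1))) * hβrel
    - (2*β*(1+γ)*(gsf z ^ γ)*(guf γ z ^ (β-1))) * hQ
end

section
/- Let γ>0, ρ(x,y)=(|x|^{2(1+γ)}+(1+γ)²|y|²)^{1/(2(1+γ))}, and ∇_γ=(∇_x,|x|^γ∇_y). Then at every point z=(x,y) with ρ(z)≠0 and x≠0, the identity ∇_γ(|∇_γρ|)·∇_γρ = 0 holds, i.e., the Grushin gradient of the function z↦|∇_γρ(z)| is orthogonal to ∇_γρ. -/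
set_option maxHeartbeats 1000000


open MeasureTheory Real

/-- `∇_γ(|∇_γρ|) · ∇_γρ = 0`. -/
theorem stmt4 (γ : ℝ) (hγ : 0 < γ) (m k : ℕ) (hm : 1 ≤ m) (hk : 1 ≤ k)
    (z : GSp m k) (hz : grho γ z ≠ 0) (hx : z.1 ≠ 0) :
    (∑ i, fderiv ℝ (fun w : GSp m k => ‖w.1‖ ^ γ / grho γ w ^ γ) z
        (EuclideanSpace.single i (1:ℝ), 0) *
      fderiv ℝ (grho γ) z (EuclideanSpace.single i (1:ℝ), 0))
    + ‖z.1‖ ^ (2 * γ) * (∑ j, fderiv ℝ (fun w : GSp m k => ‖w.1‖ ^ γ / grho γ w ^ γ) z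
        (0, EuclideanSpace.single j (1:ℝ)) *
      fderiv ℝ (grho γ) z (0, EuclideanSpace.single j (1:ℝ))) = 0 := by
  have hc : (0:ℝ) < 1 + γ := by linarith
  set s : ℝ := 1 / (2 * (1 + γ)) with hs_def
  -- rewrite grho
  have hgr : grho γ = fun w : GSp m k =>
      ((‖w.1‖ ^ 2) ^ (1 + γ) + (1 + γ) ^ 2 * ‖w.2‖ ^ 2) ^ s := by
    funext w
    unfold grho
    congr 2
    rw [← Real.rpow_natCast ‖w.1‖ 2, ← Real.rpow_mul (norm_nonneg _)]
    norm_num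
  have hfnn : ∀ w : GSp m k, 0 ≤ (‖w.1‖ ^ 2) ^ (1 + γ) + (1 + γ) ^ 2 * ‖w.2‖ ^ 2 := by
    intro w
    have := Real.rpow_nonneg (by positivity : (0:ℝ) ≤ ‖w.1‖ ^ 2) (1 + γ)
    positivity
  -- rewrite psi
  have hψeq : (fun w : GSp m k => ‖w.1‖ ^ γ / grho γ w ^ γ)
      = fun w : GSp m k => (‖w.1‖ ^ 2) ^ (γ / 2)
        * ((‖w.1‖ ^ 2) ^ (1 + γ) + (1 + γ) ^ 2 * ‖w.2‖ ^ 2) ^ (-(s * γ)) := by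
    funext w
    rw [hgr]
    have h1 : ‖w.1‖ ^ γ = (‖w.1‖ ^ 2) ^ (γ / 2) := by
      rw [← Real.rpow_natCast ‖w.1‖ 2, ← Real.rpow_mul (norm_nonneg _)]
      congr 1
      push_cast
      ring
    have h2 : (((‖w.1‖ ^ 2) ^ (1 + γ) + (1 + γ) ^ 2 * ‖w.2‖ ^ 2) ^ s) ^ γ
        = ((‖w.1‖ ^ 2) ^ (1 + γ) + (1 + γ) ^ 2 * ‖w.2‖ ^ 2) ^ (s * γ) :=
      (Real.rpow_mul (hfnn w) s γ).symm
    rw [h1, h2, Real.rpow_neg (hfnn w), div_eq_mul_inv]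
  have hxn : ‖z.1‖ ≠ 0 := norm_ne_zero_iff.mpr hx
  have hUpos : (0:ℝ) < ‖z.1‖ ^ 2 := by positivity
  have hFpos : (0:ℝ) < (‖z.1‖ ^ 2) ^ (1 + γ) + (1 + γ) ^ 2 * ‖z.2‖ ^ 2 := by
    have := Real.rpow_pos_of_pos hUpos (1 + γ)
    positivity
  -- derivatives
  have hu : HasFDerivAt (fun w : GSp m k => ‖w.1‖ ^ 2)
      (2 • ((innerSL ℝ z.1).comp (ContinuousLinearMap.fst ℝ _ _))) z :=
    (hasFDerivAt_fst (p := z)).norm_sq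
  have hv : HasFDerivAt (fun w : GSp m k => ‖w.2‖ ^ 2)
      (2 • ((innerSL ℝ z.2).comp (ContinuousLinearMap.snd ℝ _ _))) z :=
    (hasFDerivAt_snd (p := z)).norm_sq
  have hf : HasFDerivAt (fun w : GSp m k => (‖w.1‖ ^ 2) ^ (1 + γ) + (1 + γ) ^ 2 * ‖w.2‖ ^ 2)
      (((1 + γ) * (‖z.1‖ ^ 2) ^ (1 + γ - 1)) • (2 • ((innerSL ℝ z.1).comp (ContinuousLinearMap.fst ℝ _ _)))
        + ((1 + γ) ^ 2) • (2 • ((innerSL ℝ z.2).comp (ContinuousLinearMap.snd ℝ _ _)))) z :=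
    (hu.rpow_const (Or.inl hUpos.ne')).add (hv.const_mul _)
  have hρ := hf.rpow_const (p := s) (Or.inl hFpos.ne')
  have hψ : HasFDerivAt (fun w : GSp m k => (‖w.1‖ ^ 2) ^ (γ / 2)
      * ((‖w.1‖ ^ 2) ^ (1 + γ) + (1 + γ) ^ 2 * ‖w.2‖ ^ 2) ^ (-(s * γ))) _ z :=
    (hu.rpow_const (p := γ / 2) (Or.inl hUpos.ne')).mul
    (hf.rpow_const (p := -(s * γ)) (Or.inl hFpos.ne'))
  rw [hψeq, hgr, hψ.fderiv, hρ.fderiv]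
  simp only [ContinuousLinearMap.add_apply, ContinuousLinearMap.smul_apply,
    ContinuousLinearMap.coe_comp', Function.comp_apply, ContinuousLinearMap.coe_fst',
    ContinuousLinearMap.coe_snd', innerSL_apply_apply, smul_eq_mul, nsmul_eq_mul,
    EuclideanSpace.inner_single_right, RCLike.inner_apply, conj_trivial,
    inner_zero_right, mul_zero, zero_add, add_zero, mul_one, Nat.cast_ofNat, zero_mul]
  set U := ‖z.1‖ ^ 2 with hU_def
  set V := ‖z.2‖ ^ 2 with hV_def
  set F := U ^ (1 + γ) + (1 + γ) ^ 2 * V with hF_def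
  -- clean exponents
  rw [show (1:ℝ) + γ - 1 = γ from by ring]
  have hUne : U ≠ 0 := hUpos.ne'
  have hFne : F ≠ 0 := hFpos.ne'
  have hsum1 : ∑ i, z.1 i * z.1 i = U := by
    rw [hU_def, ← real_inner_self_eq_norm_sq]; simp only [PiLp.inner_apply, RCLike.inner_apply, conj_trivial, mul_comm]
  have hsum2 : ∑ j, z.2 j * z.2 j = V := by
    rw [hV_def, ← real_inner_self_eq_norm_sq]; simp only [PiLp.inner_apply, RCLike.inner_apply, conj_trivial, mul_comm]
  have hnx : ‖z.1‖ ^ (2 * γ) = U ^ γ := by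
    rw [hU_def, ← Real.rpow_natCast ‖z.1‖ 2, ← Real.rpow_mul (norm_nonneg _)]
    norm_num
  set P := U ^ (γ / 2) with hP_def
  set Q := F ^ s with hQ_def
  set R := F ^ (s * γ) with hR_def
  have hUγ : U ^ γ = P * P := by
    rw [hP_def, ← Real.rpow_add hUpos]; ring_nf
  have hUγ2 : U ^ (γ / 2 - 1) = P / U := by
    rw [hP_def, Real.rpow_sub hUpos, Real.rpow_one]
  have hUc : U ^ (1 + γ) = U * (P * P) := by
    rw [Real.rpow_add hUpos, Real.rpow_one, hUγ]
  have hF1 : F ^ (s - 1) = Q / F := by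
    rw [hQ_def, Real.rpow_sub hFpos, Real.rpow_one]
  have hF2 : F ^ (-(s * γ)) = 1 / R := by
    rw [hR_def, Real.rpow_neg hFpos.le, one_div]
  have hF3 : F ^ (-(s * γ) - 1) = 1 / (R * F) := by
    rw [Real.rpow_sub hFpos, Real.rpow_neg hFpos.le, Real.rpow_one, hR_def]
    field_simp
  have hrel : F = U * (P * P) + (1 + γ) ^ 2 * V := by rw [hF_def, hUc]
  have hsc : 2 * s * (1 + γ) = 1 := by
    rw [hs_def]; field_simp
  rw [hnx, hUγ, hUγ2, hF1, hF2, hF3]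
  set A : ℝ := P * (-(s * γ) * (1 / (R * F)) * ((1 + γ) * (P * P) * 2)) +
      1 / R * (γ / 2 * (P / U) * 2) with hA_def
  set B : ℝ := s * (Q / F) * ((1 + γ) * (P * P) * 2) with hB_def
  set A2 : ℝ := P * (-(s * γ) * (1 / (R * F)) * ((1 + γ) ^ 2 * 2)) with hA2_def
  set B2 : ℝ := s * (Q / F) * ((1 + γ) ^ 2 * 2) with hB2_def
  have e1 : ∀ x : Fin m,
      (P * (-(s * γ) * (1 / (R * F)) * ((1 + γ) * (P * P) * (2 * (1 * z.1 x)))) +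
          1 / R * (γ / 2 * (P / U) * (2 * (1 * z.1 x)))) *
        (s * (Q / F) * ((1 + γ) * (P * P) * (2 * (1 * z.1 x))))
      = (A * B) * (z.1 x * z.1 x) := fun x => by
    rw [hA_def, hB_def]; ring
  have e2 : ∀ x : Fin k,
      P * (-(s * γ) * (1 / (R * F)) * ((1 + γ) ^ 2 * (2 * (1 * z.2 x)))) *
        (s * (Q / F) * ((1 + γ) ^ 2 * (2 * (1 * z.2 x))))
      = (A2 * B2) * (z.2 x * z.2 x) := fun x => by
    rw [hA2_def, hB2_def]; ring
  rw [Finset.sum_congr rfl fun x _ => e1 x, Finset.sum_congr rfl fun x _ => e2 x,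
    ← Finset.mul_sum, ← Finset.mul_sum, hsum1, hsum2]
  have hRne : R ≠ 0 := (Real.rpow_pos_of_pos hFpos _).ne'
  have hFne' : U * (P * P) + (1 + γ) ^ 2 * V ≠ 0 := hrel ▸ hFne
  have hcne : (1 + γ) ≠ 0 := hc.ne'
  rw [hA_def, hB_def, hA2_def, hB2_def, hs_def, hrel]
  have hD : P ^ 2 * U + (1 + γ) ^ 2 * V ≠ 0 := by rw [sq, mul_comm (P * P)]; exact hFne'
  field_simp
  ring
end

section
/- For any a,b∈ℝ^n and p≥2, there exists a constant c(p)>0 depending only on p such that |a+b|^p − |a|^p ≥ c(p)|b|^p + p|a|^{p-2}⟨a,b⟩. -/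
open MeasureTheory Real

lemma tangent_le {x y q : ℝ} (hx : 0 ≤ x) (hy : 0 < y) (hq : 1 ≤ q) :
    y ^ q + q * y ^ (q - 1) * (x - y) ≤ x ^ q := by
  have h1 : (-1 : ℝ) ≤ (x - y) / y := by
    rw [le_div_iff₀ hy]; nlinarith
  have h := one_add_mul_self_le_rpow_one_add h1 hq
  have hxy : 1 + (x - y) / y = x / y := by field_simp; ring
  rw [hxy, Real.div_rpow hx hy.le] at h
  have hyq : 0 < y ^ q := Real.rpow_pos_of_pos hy q
  have h2 := mul_le_mul_of_nonneg_right h hyq.le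
  rw [div_mul_cancel₀ _ (ne_of_gt hyq)] at h2
  have h3 : y ^ (q - 1) = y ^ q / y := Real.rpow_sub_one (ne_of_gt hy) q
  calc y ^ q + q * y ^ (q - 1) * (x - y)
      = (1 + q * ((x - y) / y)) * y ^ q := by rw [h3]; field_simp
    _ ≤ x ^ q := h2

lemma sevenp {p : ℝ} (hp : 2 ≤ p) : 1 + 8 * p < (7 : ℝ) ^ p := by
  have hlog : (1 : ℝ) ≤ Real.log 7 := by
    rw [Real.le_log_iff_exp_le (by norm_num)]
    exact (Real.exp_one_lt_d9).le.trans (by norm_num)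
  have h1 : p - 1 ≤ (7 : ℝ) ^ (p - 2) := by
    rw [Real.rpow_def_of_pos (by norm_num)]
    have := Real.add_one_le_exp (Real.log 7 * (p - 2))
    nlinarith
  have h2 : (7 : ℝ) ^ p = 49 * 7 ^ (p - 2) := by
    rw [show p = 2 + (p - 2) by ring, Real.rpow_add (by norm_num)]
    norm_num
  nlinarith

set_option maxHeartbeats 1600000 in
lemma scalar_key (p : ℝ) (hp : 2 ≤ p) (A B s : ℝ) (hA : 0 ≤ A) (hB : 0 ≤ B)
    (hs1 : -(A * B) ≤ s) (hs2 : s ≤ A * B) :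
    (A ^ 2 + 2 * s + B ^ 2) ^ (p / 2) - A ^ p ≥
      min ((p / 2) * (1 / 8 : ℝ) ^ (p - 2)) ((7 / 8 : ℝ) ^ p - (1 / 8) ^ p - p * (1 / 8) ^ (p - 1))
        * B ^ p + p * A ^ (p - 2) * s := by
  set c := min ((p / 2) * (1 / 8 : ℝ) ^ (p - 2)) ((7 / 8 : ℝ) ^ p - (1 / 8) ^ p - p * (1 / 8) ^ (p - 1)) with hc
  have hc1 : c ≤ (p / 2) * (1 / 8 : ℝ) ^ (p - 2) := min_le_left _ _
  have hc2 : c ≤ (7 / 8 : ℝ) ^ p - (1 / 8) ^ p - p * (1 / 8) ^ (p - 1) := min_le_right _ _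
  have hp0 : p ≠ 0 := by linarith
  have hsq : ∀ t : ℝ, 0 ≤ t → ∀ r : ℝ, (t ^ 2) ^ r = t ^ (2 * r) := by
    intro t ht r
    rw [← Real.rpow_natCast t 2, ← Real.rpow_mul ht]
    norm_num
  -- case B = 0
  rcases eq_or_lt_of_le hB with hB0 | hBpos
  · have hs0 : s = 0 := by nlinarith
    rw [← hB0, hs0, Real.zero_rpow hp0]
    have e : (A ^ 2 + 2 * 0 + 0 ^ 2 : ℝ) = A ^ 2 := by ring
    rw [e, hsq A hA (p / 2), show 2 * (p / 2) = p by ring]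
    simp
  -- case A = 0
  rcases eq_or_lt_of_le hA with hA0 | hApos
  · have hs0 : s = 0 := by nlinarith
    rw [← hA0, hs0, Real.zero_rpow hp0]
    have e : ((0 : ℝ) ^ 2 + 2 * 0 + B ^ 2 : ℝ) = B ^ 2 := by ring
    rw [e, hsq B hB (p / 2), show 2 * (p / 2) = p by ring]
    have hc2' : c ≤ 1 := by
      have h78 : (7 / 8 : ℝ) ^ p ≤ 1 := Real.rpow_le_one (by norm_num) (by norm_num) (by linarith)
      have h18 : (0 : ℝ) ≤ (1 / 8 : ℝ) ^ p := Real.rpow_nonneg (by norm_num) _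
      have h18' : (0 : ℝ) ≤ (1 / 8 : ℝ) ^ (p - 1) := Real.rpow_nonneg (by norm_num) _
      nlinarith
    have hBp : 0 ≤ B ^ p := Real.rpow_nonneg hB _
    have h1 : c * B ^ p ≤ 1 * B ^ p := mul_le_mul_of_nonneg_right hc2' hBp
    simp only [mul_zero, add_zero]
    nlinarith
  -- main case: A > 0, B > 0
  have hBp : 0 ≤ B ^ p := Real.rpow_nonneg hB _
  have hX : 0 ≤ A ^ 2 + 2 * s + B ^ 2 := by nlinarith [sq_nonneg (A - B), hs1]
  have hA2 : (0 : ℝ) < A ^ 2 := by positivity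
  have hkey := tangent_le hX hA2 (by linarith : 1 ≤ p / 2)
  have eA1 : ((A ^ 2 : ℝ)) ^ (p / 2) = A ^ p := by
    rw [hsq A hA, show 2 * (p / 2) = p by ring]
  have eA2 : ((A ^ 2 : ℝ)) ^ (p / 2 - 1) = A ^ (p - 2) := by
    rw [hsq A hA, show 2 * (p / 2 - 1) = p - 2 by ring]
  rw [eA1, eA2] at hkey
  have hu : (0 : ℝ) ≤ A ^ (p - 2) := Real.rpow_nonneg hA _
  rcases le_or_gt B (8 * A) with hAB | hAB
  · -- B ≤ 8A : use the tangent bound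
    have h1 : (B / 8 : ℝ) ^ (p - 2) ≤ A ^ (p - 2) :=
      Real.rpow_le_rpow (by positivity) (by linarith) (by linarith)
    have h2 : (B / 8 : ℝ) ^ (p - 2) = (1 / 8 : ℝ) ^ (p - 2) * B ^ (p - 2) := by
      rw [show (B / 8 : ℝ) = (1 / 8) * B by ring, Real.mul_rpow (by norm_num) hB]
    have h3 : B ^ (p - 2) * B ^ (2 : ℕ) = B ^ p := by
      rw [← Real.rpow_natCast B 2, ← Real.rpow_add hBpos]
      norm_num
    have step : c * B ^ p ≤ p / 2 * A ^ (p - 2) * B ^ 2 := by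
      calc c * B ^ p ≤ (p / 2 * (1 / 8 : ℝ) ^ (p - 2)) * B ^ p :=
            mul_le_mul_of_nonneg_right hc1 hBp
        _ = p / 2 * ((B / 8) ^ (p - 2) * B ^ 2) := by rw [h2, ← h3]; push_cast; ring
        _ ≤ p / 2 * (A ^ (p - 2) * B ^ 2) := by
            apply mul_le_mul_of_nonneg_left _ (by linarith)
            exact mul_le_mul_of_nonneg_right h1 (by positivity)
        _ = p / 2 * A ^ (p - 2) * B ^ 2 := by ring
    nlinarith [hkey, step]
  · -- 8A < B
    have hBA : (0 : ℝ) ≤ B - A := by linarith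
    have hX2 : (B - A) ^ 2 ≤ A ^ 2 + 2 * s + B ^ 2 := by nlinarith
    have hr1 : ((B - A) ^ 2) ^ (p / 2) ≤ (A ^ 2 + 2 * s + B ^ 2) ^ (p / 2) :=
      Real.rpow_le_rpow (by positivity) hX2 (by linarith)
    rw [hsq _ hBA, show 2 * (p / 2) = p by ring] at hr1
    have h7 : (7 / 8 * B : ℝ) ^ p ≤ (B - A) ^ p :=
      Real.rpow_le_rpow (by positivity) (by linarith) (by linarith)
    have h7' : (7 / 8 * B : ℝ) ^ p = (7 / 8 : ℝ) ^ p * B ^ p :=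
      Real.mul_rpow (by norm_num) hB
    have h8 : A ^ p ≤ (1 / 8 * B : ℝ) ^ p :=
      Real.rpow_le_rpow hA (by linarith) (by linarith)
    have h8' : (1 / 8 * B : ℝ) ^ p = (1 / 8 : ℝ) ^ p * B ^ p :=
      Real.mul_rpow (by norm_num) hB
    have hA1 : A ^ (p - 1) = A ^ (p - 2) * A := by
      rw [show p - 1 = p - 2 + 1 by ring, Real.rpow_add_one (ne_of_gt hApos)]
    have h9 : A ^ (p - 1) ≤ (1 / 8 * B : ℝ) ^ (p - 1) :=
      Real.rpow_le_rpow hA (by linarith) (by linarith)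
    have h9' : (1 / 8 * B : ℝ) ^ (p - 1) = (1 / 8 : ℝ) ^ (p - 1) * B ^ (p - 1) :=
      Real.mul_rpow (by norm_num) hB
    have h10 : B ^ p = B ^ (p - 1) * B := by
      rw [show p = p - 1 + 1 by ring, Real.rpow_add_one (ne_of_gt hBpos)]
      ring_nf
    have chain : p * A ^ (p - 2) * s ≤ p * ((1 / 8 : ℝ) ^ (p - 1) * B ^ p) := by
      have e1 : (p * A ^ (p - 2)) * s ≤ (p * A ^ (p - 2)) * (A * B) :=
        mul_le_mul_of_nonneg_left hs2 (by positivity)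
      have e3 : p * A ^ (p - 1) * B ≤ p * ((1 / 8 : ℝ) ^ (p - 1) * B ^ (p - 1)) * B := by
        apply mul_le_mul_of_nonneg_right _ hB
        apply mul_le_mul_of_nonneg_left _ (by linarith : (0:ℝ) ≤ p)
        rw [← h9']; exact h9
      have e2 : (p * A ^ (p - 2)) * (A * B) = p * A ^ (p - 1) * B := by
        rw [hA1]; ring
      have e4 : p * ((1 / 8 : ℝ) ^ (p - 1) * B ^ (p - 1)) * B
          = p * ((1 / 8 : ℝ) ^ (p - 1) * B ^ p) := by rw [h10]; ring
      linarith [e1, e3]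
    have hcB := mul_le_mul_of_nonneg_right hc2 hBp
    rw [h7'] at h7
    rw [h8'] at h8
    linarith [hr1, h7, h8, chain, hcB]

/-- elementary convexity inequality for `p ≥ 2`. -/
theorem stmt14 (p : ℝ) (hp : 2 ≤ p) :
    ∃ c : ℝ, 0 < c ∧ ∀ (n : ℕ) (a b : EuclideanSpace ℝ (Fin n)),
      ‖a + b‖ ^ p - ‖a‖ ^ p ≥ c * ‖b‖ ^ p + p * ‖a‖ ^ (p - 2) * (inner ℝ a b : ℝ) := by
  have hc1pos : 0 < (p / 2) * (1 / 8 : ℝ) ^ (p - 2) := by positivity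
  have hc2pos : 0 < (7 / 8 : ℝ) ^ p - (1 / 8) ^ p - p * (1 / 8) ^ (p - 1) := by
    have e1 : (7 / 8 : ℝ) ^ p = 7 ^ p * (1 / 8) ^ p := by
      rw [← Real.mul_rpow (by norm_num) (by norm_num)]; norm_num
    have e2 : (1 / 8 : ℝ) ^ (p - 1 + 1) = (1 / 8) ^ (p - 1) * (1 / 8) :=
      Real.rpow_add_one (by norm_num) _
    rw [show p - 1 + 1 = p by ring] at e2
    have h18 : 0 < (1 / 8 : ℝ) ^ (p - 1) := Real.rpow_pos_of_pos (by norm_num) _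
    have h7p := sevenp hp
    nlinarith [mul_pos h18 (show (0:ℝ) < 7 ^ p - (1 + 8 * p) by linarith)]
  refine ⟨_, lt_min hc1pos hc2pos, fun n a b => ?_⟩
  have hnorm : ‖a + b‖ ^ p = (‖a‖ ^ 2 + 2 * (inner ℝ a b : ℝ) + ‖b‖ ^ 2) ^ (p / 2) := by
    rw [← norm_add_sq_real, ← Real.rpow_natCast (‖a + b‖) 2,
      ← Real.rpow_mul (norm_nonneg _)]
    norm_num
    rw [show (2:ℝ) * (p / 2) = p by ring]
  have habs := abs_real_inner_le_norm a b
  rw [abs_le] at habs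
  rw [hnorm]
  exact scalar_key p hp ‖a‖ ‖b‖ (inner ℝ a b) (norm_nonneg a) (norm_nonneg b)
    (by simpa using habs.1) habs.2
end

section
/- For any w₁,w₂∈ℝ^n and 1<q<2, there exists a constant c(q)>0 depending only on q such that c(q)|w₂|^q ≥ |w₁+w₂|^q − |w₁|^q − q|w₁|^{q-2}⟨w₁,w₂⟩. -/
open MeasureTheory Real

lemma key15 (q a b s : ℝ) (hq1 : 1 < q) (hq2 : q < 2) (ha : 0 < a) (hb : 0 < b)
    (hba : b ≤ a) (hX : 0 ≤ a^2 + 2*s + b^2) :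
    (a^2 + 2*s + b^2) ^ (q/2) - a ^ q - q * a ^ (q-2) * s ≤ (q/2) * b ^ q := by
  have hp1 : 0 ≤ q/2 := by linarith
  have hp2 : q/2 ≤ 1 := by linarith
  set X := a^2 + 2*s + b^2 with hXdef
  have ha2 : (0:ℝ) < a^2 := by positivity
  have hs1 : -1 ≤ X / a^2 - 1 := by
    have : 0 ≤ X / a^2 := div_nonneg hX ha2.le
    linarith
  have hbern : (1 + (X / a^2 - 1)) ^ (q/2) ≤ 1 + (q/2) * (X / a^2 - 1) :=
    rpow_one_add_le_one_add_mul_self hs1 hp1 hp2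
  rw [show (1 + (X / a^2 - 1)) = X / a^2 by ring] at hbern
  have haq : ((a^2 : ℝ)) ^ (q/2) = a ^ q := by
    rw [← Real.rpow_two, ← Real.rpow_mul ha.le, show (2:ℝ)*(q/2) = q by ring]
  have hXsplit : X ^ (q/2) = a ^ q * (X / a^2) ^ (q/2) := by
    rw [← haq, ← Real.mul_rpow ha2.le (div_nonneg hX ha2.le),
      mul_div_cancel₀ _ ha2.ne']
  have haq2 : a ^ q / a ^ 2 = a ^ (q - 2) := by
    rw [Real.rpow_sub ha, Real.rpow_two]
  have hstep : X ^ (q/2) ≤ a ^ q + q * a ^ (q-2) * s + (q/2) * (a ^ (q-2) * b^2) := by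
    calc X ^ (q/2) = a ^ q * (X / a^2) ^ (q/2) := hXsplit
      _ ≤ a ^ q * (1 + (q/2) * (X / a^2 - 1)) := by
          apply mul_le_mul_of_nonneg_left hbern (by positivity)
      _ = a ^ q + (a ^ q / a ^ 2) * ((q/2) * (2*s + b^2)) := by
          field_simp; ring
      _ = a ^ q + q * a ^ (q-2) * s + (q/2) * (a ^ (q-2) * b^2) := by
          rw [haq2]; ring
  have hab : a ^ (q-2) ≤ b ^ (q-2) :=
    Real.rpow_le_rpow_of_nonpos hb hba (by linarith)
  have hbq : b ^ (q-2) * b^2 = b ^ q := by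
    rw [← Real.rpow_two, ← Real.rpow_add hb, show q-2+2 = q by ring]
  have hfin : a ^ (q-2) * b^2 ≤ b ^ q := by
    rw [← hbq]
    exact mul_le_mul_of_nonneg_right hab (by positivity)
  nlinarith [hstep, hfin]


/-- elementary inequality for `1 < q < 2`. -/
theorem stmt15 (q : ℝ) (hq1 : 1 < q) (hq2 : q < 2) :
    ∃ c : ℝ, 0 < c ∧ ∀ (n : ℕ) (w₁ w₂ : EuclideanSpace ℝ (Fin n)),
      c * ‖w₂‖ ^ q ≥ ‖w₁ + w₂‖ ^ q - ‖w₁‖ ^ q - q * ‖w₁‖ ^ (q - 2) * (inner ℝ w₁ w₂ : ℝ) := by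
  have hq0 : (0:ℝ) < q := by linarith
  refine ⟨2 ^ q + q, by positivity, fun n w₁ w₂ => ?_⟩
  have ha0 : (0:ℝ) ≤ ‖w₁‖ := norm_nonneg _
  have hb0 : (0:ℝ) ≤ ‖w₂‖ := norm_nonneg _
  rcases eq_or_lt_of_le hb0 with hb | hb
  · have hw : w₂ = 0 := norm_eq_zero.mp hb.symm
    subst hw
    simp [Real.zero_rpow hq0.ne']
  · have hsq : ‖w₁ + w₂‖ ^ 2 = ‖w₁‖ ^ 2 + 2 * (inner ℝ w₁ w₂ : ℝ) + ‖w₂‖ ^ 2 :=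
      norm_add_sq_real w₁ w₂
    have hinner : |(inner ℝ w₁ w₂ : ℝ)| ≤ ‖w₁‖ * ‖w₂‖ := abs_real_inner_le_norm w₁ w₂
    rcases le_or_gt ‖w₂‖ ‖w₁‖ with hba | hba
    · -- 0 < ‖w₂‖ ≤ ‖w₁‖ : Bernoulli/concavity bound
      have ha : (0:ℝ) < ‖w₁‖ := lt_of_lt_of_le hb hba
      have hX : 0 ≤ ‖w₁‖ ^ 2 + 2 * (inner ℝ w₁ w₂ : ℝ) + ‖w₂‖ ^ 2 := by
        rw [← hsq]; positivity
      have hnorm : ‖w₁ + w₂‖ ^ q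
          = (‖w₁‖ ^ 2 + 2 * (inner ℝ w₁ w₂ : ℝ) + ‖w₂‖ ^ 2) ^ (q/2) := by
        rw [← hsq, ← Real.rpow_two, ← Real.rpow_mul (norm_nonneg _),
          show (2:ℝ)*(q/2) = q by ring]
      have hkey := key15 q ‖w₁‖ ‖w₂‖ (inner ℝ w₁ w₂ : ℝ) hq1 hq2 ha hb hba hX
      have hmul : (q/2) * ‖w₂‖ ^ q ≤ (2 ^ q + q) * ‖w₂‖ ^ q := by
        have h2q : (0:ℝ) < 2 ^ q := by positivity
        have : (0:ℝ) ≤ ‖w₂‖ ^ q := by positivity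
        nlinarith
      rw [ge_iff_le, hnorm]
      linarith
    · -- ‖w₁‖ < ‖w₂‖ : crude bounds
      have h1 : ‖w₁ + w₂‖ ^ q ≤ 2 ^ q * ‖w₂‖ ^ q := by
        have hle : ‖w₁ + w₂‖ ≤ 2 * ‖w₂‖ := by
          calc ‖w₁ + w₂‖ ≤ ‖w₁‖ + ‖w₂‖ := norm_add_le _ _
            _ ≤ 2 * ‖w₂‖ := by linarith
        calc ‖w₁ + w₂‖ ^ q ≤ (2 * ‖w₂‖) ^ q :=
              Real.rpow_le_rpow (norm_nonneg _) hle hq0.le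
          _ = 2 ^ q * ‖w₂‖ ^ q := Real.mul_rpow (by norm_num) hb0
      have haux : ‖w₁‖ ^ (q-2) * (‖w₁‖ * ‖w₂‖) ≤ ‖w₂‖ ^ q := by
        rcases eq_or_lt_of_le ha0 with ha | ha
        · rw [← ha]
          simp
          positivity
        · have e1 : ‖w₁‖ ^ (q-2) * ‖w₁‖ = ‖w₁‖ ^ (q-1) := by
            rw [← Real.rpow_add_one ha.ne', show q-2+1 = q-1 by ring]
          have e2 : ‖w₂‖ ^ (q-1) * ‖w₂‖ = ‖w₂‖ ^ q := by
            rw [← Real.rpow_add_one hb.ne', show q-1+1 = q by ring]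
          have e3 : ‖w₁‖ ^ (q-1) ≤ ‖w₂‖ ^ (q-1) :=
            Real.rpow_le_rpow ha0 hba.le (by linarith)
          calc ‖w₁‖ ^ (q-2) * (‖w₁‖ * ‖w₂‖) = (‖w₁‖ ^ (q-2) * ‖w₁‖) * ‖w₂‖ := by ring
            _ = ‖w₁‖ ^ (q-1) * ‖w₂‖ := by rw [e1]
            _ ≤ ‖w₂‖ ^ (q-1) * ‖w₂‖ := mul_le_mul_of_nonneg_right e3 hb0
            _ = ‖w₂‖ ^ q := e2
      have hA : (0:ℝ) ≤ ‖w₁‖ ^ (q-2) := Real.rpow_nonneg ha0 _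
      have hs2 : -(‖w₁‖ * ‖w₂‖) ≤ (inner ℝ w₁ w₂ : ℝ) := by
        have := neg_abs_le (inner ℝ w₁ w₂ : ℝ)
        linarith
      have h2 : -(q * ‖w₂‖ ^ q) ≤ q * ‖w₁‖ ^ (q-2) * (inner ℝ w₁ w₂ : ℝ) := by
        have hmm : ‖w₁‖ ^ (q-2) * (-(‖w₁‖ * ‖w₂‖)) ≤ ‖w₁‖ ^ (q-2) * (inner ℝ w₁ w₂ : ℝ) :=
          mul_le_mul_of_nonneg_left hs2 hA
        nlinarith
      have h3 : (0:ℝ) ≤ ‖w₁‖ ^ q := Real.rpow_nonneg ha0 _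
      linarith
end

section
/- Let γ>0, m,k≥1, Q=m+(1+γ)k with Q+α-4>0 and 2<α<Q, and let ρ(x,y)=(|x|^{2(1+γ)}+(1+γ)²|y|²)^{1/(2(1+γ))}. For ε>0 define the radial function φ_ε(z)=g(ρ(z)) where g(s)=((Q+α-4)/2+ε)(s−1)+1 for 0≤s≤1 and g(s)=s^{−((Q+α-4)/2+ε)} for s>1. Then ∫_{ρ>1} ρ^α|Δ_γφ_ε|²/|∇_γρ|² dz = ((Q+α-4)/2+ε)²((Q-α)/2−ε)²·∫_{ρ>1} ρ^{−Q−2ε}|∇_γρ|² dz. -/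
open MeasureTheory Real

namespace S19
variable {m k : ℕ}

variable {m k : ℕ}

noncomputable def Af (z : GSp m k) : ℝ := ‖z.1‖ ^ 2
noncomputable def Bf (z : GSp m k) : ℝ := ‖z.2‖ ^ 2
noncomputable def uf (γ : ℝ) (z : GSp m k) : ℝ := Af z ^ (1 + γ) + (1 + γ) ^ 2 * Bf z
noncomputable def phf (γ c : ℝ) (z : GSp m k) : ℝ := uf γ z ^ c

noncomputable def DA (z : GSp m k) : GSp m k →L[ℝ] ℝ :=
  2 • ((innerSL ℝ z.1).comp (ContinuousLinearMap.fst ℝ _ _))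
noncomputable def DB (z : GSp m k) : GSp m k →L[ℝ] ℝ :=
  2 • ((innerSL ℝ z.2).comp (ContinuousLinearMap.snd ℝ _ _))

noncomputable def exd (m k : ℕ) (i : Fin m) : GSp m k := (EuclideanSpace.single i 1, 0)
noncomputable def eyd (m k : ℕ) (j : Fin k) : GSp m k := (0, EuclideanSpace.single j 1)

lemma DA_exd (z : GSp m k) (i : Fin m) : DA z (exd m k i) = 2 * z.1 i := by
  simp [DA, exd, EuclideanSpace.inner_single_right, real_inner_comm]

lemma DA_eyd (z : GSp m k) (j : Fin k) : DA z (eyd m k j) = 0 := by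
  simp [DA, eyd]

lemma DB_exd (z : GSp m k) (i : Fin m) : DB z (exd m k i) = 0 := by
  simp [DB, exd]

lemma DB_eyd (z : GSp m k) (j : Fin k) : DB z (eyd m k j) = 2 * z.2 j := by
  simp [DB, eyd, EuclideanSpace.inner_single_right, real_inner_comm]

lemma hasFDerivAt_Af (z : GSp m k) : HasFDerivAt Af (DA z) z :=
  (hasFDerivAt_fst (p := z)).norm_sq

lemma hasFDerivAt_Bf (z : GSp m k) : HasFDerivAt Bf (DB z) z :=
  (hasFDerivAt_snd (p := z)).norm_sq


lemma Af_pos {z : GSp m k} (hz : z.1 ≠ 0) : 0 < Af z := by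
  simp [Af, norm_pos_iff, hz, pow_pos]

lemma uf_nonneg (γ : ℝ) (z : GSp m k) : 0 ≤ uf γ z := by
  unfold uf Af Bf; positivity

lemma uf_pos {γ : ℝ} {z : GSp m k} (hz : z.1 ≠ 0) : 0 < uf γ z := by
  have h1 : (0:ℝ) < Af z ^ (1+γ) := Real.rpow_pos_of_pos (Af_pos hz) _
  have h2 : (0:ℝ) ≤ Bf z := by unfold Bf; positivity
  have h3 : (0:ℝ) ≤ (1+γ)^2 := sq_nonneg _
  unfold uf; nlinarith

noncomputable def Du (γ : ℝ) (z : GSp m k) : GSp m k →L[ℝ] ℝ :=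
  ((1+γ) * Af z ^ γ) • DA z + ((1+γ)^2 : ℝ) • DB z

lemma hasFDerivAt_uf (γ : ℝ) (hγ : 0 < γ) (z : GSp m k) :
    HasFDerivAt (uf γ) (Du γ z) z := by
  have hA : HasFDerivAt (fun w : GSp m k => Af w ^ (1+γ))
      (((1+γ) * Af z ^ ((1+γ)-1)) • DA z) z :=
    (hasFDerivAt_Af z).rpow_const (Or.inr (by linarith))
  have hB : HasFDerivAt (fun w : GSp m k => ((1+γ)^2 : ℝ) * Bf w)
      (((1+γ)^2 : ℝ) • DB z) z := (hasFDerivAt_Bf z).const_mul _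
  have : HasFDerivAt (uf γ) (((1+γ) * Af z ^ ((1+γ)-1)) • DA z + ((1+γ)^2 : ℝ) • DB z) z := hA.add hB
  simpa [Du, show (1+γ)-1 = γ by ring] using this

lemma hasFDerivAt_phf (γ : ℝ) (hγ : 0 < γ) (c : ℝ) (z : GSp m k) (hz : z.1 ≠ 0) :
    HasFDerivAt (phf γ c) ((c * uf γ z ^ (c-1)) • Du γ z) z :=
  (hasFDerivAt_uf γ hγ z).rpow_const (Or.inl (uf_pos hz).ne')

lemma Du_exd (γ : ℝ) (z : GSp m k) (i : Fin m) :
    Du γ z (exd m k i) = (1+γ) * Af z ^ γ * (2 * z.1 i) := by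
  simp only [Du, ContinuousLinearMap.add_apply, ContinuousLinearMap.coe_smul',
    Pi.smul_apply, smul_eq_mul, DA_exd, DB_exd, mul_zero, add_zero]

lemma Du_eyd (γ : ℝ) (z : GSp m k) (j : Fin k) :
    Du γ z (eyd m k j) = (1+γ)^2 * (2 * z.2 j) := by
  simp [Du, DA_eyd, DB_eyd]

noncomputable def psix (γ c : ℝ) (i : Fin m) (w : GSp m k) : ℝ :=
  (2*(1+γ)*c) * (uf γ w ^ (c-1) * (Af w ^ γ * w.1 i))

noncomputable def psiy (γ c : ℝ) (j : Fin k) (w : GSp m k) : ℝ :=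
  (2*(1+γ)^2*c) * (uf γ w ^ (c-1) * w.2 j)

lemma fderiv_phf_exd (γ : ℝ) (hγ : 0 < γ) (c : ℝ) (w : GSp m k) (hw : w.1 ≠ 0) (i : Fin m) :
    fderiv ℝ (phf γ c) w (exd m k i) = psix γ c i w := by
  rw [(hasFDerivAt_phf γ hγ c w hw).fderiv]
  simp [psix, Du_exd]; ring

lemma fderiv_phf_eyd (γ : ℝ) (hγ : 0 < γ) (c : ℝ) (w : GSp m k) (hw : w.1 ≠ 0) (j : Fin k) :
    fderiv ℝ (phf γ c) w (eyd m k j) = psiy γ c j w := by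
  rw [(hasFDerivAt_phf γ hγ c w hw).fderiv]
  simp [psiy, Du_eyd]; ring


lemma exd_fst_apply (i i' : Fin m) : (exd m k i).1 i' = if i' = i then 1 else 0 := by
  simp [exd, EuclideanSpace.single_apply]

lemma eyd_snd_apply (j j' : Fin k) : (eyd m k j).2 j' = if j' = j then 1 else 0 := by
  simp [eyd, EuclideanSpace.single_apply]

lemma fderiv_psix_self (γ : ℝ) (hγ : 0 < γ) (c : ℝ) (z : GSp m k) (hz : z.1 ≠ 0) (i : Fin m) :
    fderiv ℝ (psix γ c i) z (exd m k i)
      = (2*(1+γ)*c) * ((c-1) * uf γ z ^ (c-1-1) * ((1+γ) * Af z ^ γ * (2 * z.1 i)) * (Af z ^ γ * z.1 i)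
        + uf γ z ^ (c-1) * (Af z ^ γ + γ * Af z ^ (γ-1) * (2 * z.1 i) * z.1 i)) := by
  have hu := uf_pos (γ := γ) hz
  have hA := Af_pos hz
  have h1 : HasFDerivAt (fun w : GSp m k => uf γ w ^ (c-1))
      (((c-1) * uf γ z ^ (c-1-1)) • Du γ z) z :=
    (hasFDerivAt_uf γ hγ z).rpow_const (Or.inl hu.ne')
  have h2 : HasFDerivAt (fun w : GSp m k => Af w ^ γ)
      ((γ * Af z ^ (γ-1)) • DA z) z := (hasFDerivAt_Af z).rpow_const (Or.inl hA.ne')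
  have h3 := ((EuclideanSpace.proj i).comp
    (ContinuousLinearMap.fst ℝ (EuclideanSpace ℝ (Fin m)) (EuclideanSpace ℝ (Fin k)))).hasFDerivAt (x := z)
  have h6 := ((h1.mul (h2.mul h3)).const_mul (2*(1+γ)*c))
  rw [HasFDerivAt.fderiv (show HasFDerivAt (psix γ c i) _ z from h6)]
  simp only [ContinuousLinearMap.add_apply, ContinuousLinearMap.coe_smul', Pi.smul_apply,
    smul_eq_mul, ContinuousLinearMap.comp_apply, ContinuousLinearMap.coe_fst',
    Du_exd, DA_exd, PiLp.proj_apply, exd_fst_apply, eq_self_iff_true, if_true, Pi.mul_apply]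
  ring

lemma fderiv_psiy_self (γ : ℝ) (hγ : 0 < γ) (c : ℝ) (z : GSp m k) (hz : z.1 ≠ 0) (j : Fin k) :
    fderiv ℝ (psiy γ c j) z (eyd m k j)
      = (2*(1+γ)^2*c) * ((c-1) * uf γ z ^ (c-1-1) * ((1+γ)^2 * (2 * z.2 j)) * z.2 j
        + uf γ z ^ (c-1)) := by
  have hu := uf_pos (γ := γ) hz
  have h1 : HasFDerivAt (fun w : GSp m k => uf γ w ^ (c-1))
      (((c-1) * uf γ z ^ (c-1-1)) • Du γ z) z :=
    (hasFDerivAt_uf γ hγ z).rpow_const (Or.inl hu.ne')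
  have h3 := ((EuclideanSpace.proj j).comp
    (ContinuousLinearMap.snd ℝ (EuclideanSpace ℝ (Fin m)) (EuclideanSpace ℝ (Fin k)))).hasFDerivAt (x := z)
  have h6 := ((h1.mul h3).const_mul (2*(1+γ)^2*c))
  rw [HasFDerivAt.fderiv (show HasFDerivAt (psiy γ c j) _ z from h6)]
  simp only [ContinuousLinearMap.add_apply, ContinuousLinearMap.coe_smul', Pi.smul_apply,
    smul_eq_mul, ContinuousLinearMap.comp_apply, ContinuousLinearMap.coe_snd',
    Du_eyd, DB_eyd, PiLp.proj_apply, eyd_snd_apply, eq_self_iff_true, if_true]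
  ring

lemma sum_sq_fst (z : GSp m k) : ∑ i, z.1 i ^ 2 = Af z := by
  rw [Af, EuclideanSpace.norm_eq, Real.sq_sqrt (by positivity)]
  simp [sq_abs]

lemma sum_sq_snd (z : GSp m k) : ∑ j, z.2 j ^ 2 = Bf z := by
  rw [Bf, EuclideanSpace.norm_eq, Real.sq_sqrt (by positivity)]
  simp [sq_abs]


lemma glap_alg (γ c A B u X Y W V mm kk : ℝ)
    (hu : u = X * A + (1+γ)^2 * B) (hW : W * u = Y) (hV : V * A = X) :
    ((4*(1+γ)^2*c*(c-1)*W*X*X + 4*γ*(1+γ)*c*Y*V) * A + mm * (2*(1+γ)*c*Y*X))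
      + X * ((4*(1+γ)^4*c*(c-1)*W) * B + kk * (2*(1+γ)^2*c*Y))
    = (2*(1+γ)*c) * (2*(1+γ)*c + mm + (1+γ)*kk - 2) * (X * Y) := by
  linear_combination (-(4*(1+γ)^2*c*(c-1)*X*W)) * hu + (4*(1+γ)^2*c*(c-1)*X) * hW
    + (4*γ*(1+γ)*c*Y) * hV

lemma rpow_sub_one_mul {x : ℝ} (hx : 0 < x) (a : ℝ) : x ^ (a - 1) * x = x ^ a := by
  rw [Real.rpow_sub hx, Real.rpow_one, div_mul_cancel₀ _ hx.ne']

lemma norm_fst_rpow (γ : ℝ) (z : GSp m k) : ‖z.1‖ ^ (2*γ) = Af z ^ γ := by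
  rw [Real.rpow_mul (norm_nonneg _), Real.rpow_two, Af]

lemma isOpen_ne_fst : IsOpen {w : GSp m k | w.1 ≠ 0} :=
  isOpen_compl_singleton.preimage continuous_fst

lemma glap_phf (γ : ℝ) (hγ : 0 < γ) (c : ℝ) (z : GSp m k) (hz : z.1 ≠ 0) :
    glap γ (phf γ c) z
      = (2*(1+γ)*c) * (2*(1+γ)*c + m + (1+γ)*k - 2) * (Af z ^ γ * uf γ z ^ (c-1)) := by
  have hu0 := uf_pos (γ := γ) hz
  have hA0 := Af_pos hz
  have hx : ∀ i : Fin m,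
      fderiv ℝ (fun w => fderiv ℝ (phf γ c) w (exd m k i)) z (exd m k i)
        = fderiv ℝ (psix γ c i) z (exd m k i) := by
    intro i
    apply congrFun (congrArg _ _)
    apply Filter.EventuallyEq.fderiv_eq
    filter_upwards [isOpen_ne_fst.mem_nhds hz] with w hw
    exact fderiv_phf_exd γ hγ c w hw i
  have hy : ∀ j : Fin k,
      fderiv ℝ (fun w => fderiv ℝ (phf γ c) w (eyd m k j)) z (eyd m k j)
        = fderiv ℝ (psiy γ c j) z (eyd m k j) := by
    intro j
    apply congrFun (congrArg _ _)
    apply Filter.EventuallyEq.fderiv_eq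
    filter_upwards [isOpen_ne_fst.mem_nhds hz] with w hw
    exact fderiv_phf_eyd γ hγ c w hw j
  have hXsum : (∑ i, fderiv ℝ (fun w => fderiv ℝ (phf γ c) w (exd m k i)) z (exd m k i))
      = (4*(1+γ)^2*c*(c-1)*(uf γ z ^ (c-1-1))*(Af z ^ γ)*(Af z ^ γ)
          + 4*γ*(1+γ)*c*(uf γ z ^ (c-1))*(Af z ^ (γ-1))) * Af z
        + (m : ℝ) * (2*(1+γ)*c*(uf γ z ^ (c-1))*(Af z ^ γ)) := by
    have : ∀ i : Fin m,
        fderiv ℝ (fun w => fderiv ℝ (phf γ c) w (exd m k i)) z (exd m k i)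
          = (4*(1+γ)^2*c*(c-1)*(uf γ z ^ (c-1-1))*(Af z ^ γ)*(Af z ^ γ)
              + 4*γ*(1+γ)*c*(uf γ z ^ (c-1))*(Af z ^ (γ-1))) * z.1 i ^ 2
            + 2*(1+γ)*c*(uf γ z ^ (c-1))*(Af z ^ γ) := by
      intro i
      rw [hx i, fderiv_psix_self γ hγ c z hz i]
      ring
    rw [Finset.sum_congr rfl (fun i _ => this i), Finset.sum_add_distrib,
      ← Finset.mul_sum, sum_sq_fst, Finset.sum_const, Finset.card_univ,
      Fintype.card_fin, nsmul_eq_mul]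
  have hYsum : (∑ j, fderiv ℝ (fun w => fderiv ℝ (phf γ c) w (eyd m k j)) z (eyd m k j))
      = (4*(1+γ)^4*c*(c-1)*(uf γ z ^ (c-1-1))) * Bf z
        + (k : ℝ) * (2*(1+γ)^2*c*(uf γ z ^ (c-1))) := by
    have : ∀ j : Fin k,
        fderiv ℝ (fun w => fderiv ℝ (phf γ c) w (eyd m k j)) z (eyd m k j)
          = (4*(1+γ)^4*c*(c-1)*(uf γ z ^ (c-1-1))) * z.2 j ^ 2
            + 2*(1+γ)^2*c*(uf γ z ^ (c-1)) := by
      intro j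
      rw [hy j, fderiv_psiy_self γ hγ c z hz j]
      ring
    rw [Finset.sum_congr rfl (fun j _ => this j), Finset.sum_add_distrib,
      ← Finset.mul_sum, sum_sq_snd, Finset.sum_const, Finset.card_univ,
      Fintype.card_fin, nsmul_eq_mul]
  have hglap : glap γ (phf γ c) z
      = (∑ i, fderiv ℝ (fun w => fderiv ℝ (phf γ c) w (exd m k i)) z (exd m k i))
        + Af z ^ γ * ∑ j, fderiv ℝ (fun w => fderiv ℝ (phf γ c) w (eyd m k j)) z (eyd m k j) := by
    rw [glap, norm_fst_rpow]
    rfl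
  rw [hglap, hXsum, hYsum]
  refine glap_alg γ c (Af z) (Bf z) (uf γ z) _ _ _ _ _ _ ?_ ?_ ?_
  · have h := rpow_sub_one_mul hA0 (1+γ)
    rw [show (1+γ)-1 = γ by ring] at h
    show Af z ^ (1+γ) + (1+γ)^2 * Bf z = Af z ^ γ * Af z + (1+γ)^2 * Bf z
    linear_combination -h
  · exact rpow_sub_one_mul hu0 (c-1)
  · exact rpow_sub_one_mul hA0 γ


lemma grho_eq (γ : ℝ) (z : GSp m k) :
    grho γ z = uf γ z ^ (1/(2*(1+γ))) := by
  simp only [grho, uf, Af, Bf]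
  rw [Real.rpow_mul (norm_nonneg _), Real.rpow_two]

lemma continuous_grho (γ : ℝ) (hγ : 0 < γ) : Continuous (fun z : GSp m k => grho γ z) := by
  unfold grho
  apply Continuous.rpow_const
  · apply Continuous.add
    · exact (continuous_fst.norm).rpow_const (fun x => Or.inr (by positivity))
    · exact continuous_const.mul ((continuous_snd.norm).pow 2)
  · intro x; right; positivity

lemma one_lt_uf {γ : ℝ} (hγ : 0 < γ) {z : GSp m k} (hz : 1 < grho γ z) : 1 < uf γ z := by
  by_contra h
  push_neg at h
  have h0 : 0 ≤ uf γ z := uf_nonneg γ z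
  have : grho γ z ≤ 1 := by
    rw [grho_eq γ]
    exact Real.rpow_le_one h0 h (by positivity)
  linarith

lemma glap_congr {γ : ℝ} {φ₁ φ₂ : GSp m k → ℝ} {s : Set (GSp m k)} (hs : IsOpen s)
    {z : GSp m k} (hz : z ∈ s) (h : Set.EqOn φ₁ φ₂ s) : glap γ φ₁ z = glap γ φ₂ z := by
  have hf : ∀ w ∈ s, fderiv ℝ φ₁ w = fderiv ℝ φ₂ w := by
    intro w hw
    apply Filter.EventuallyEq.fderiv_eq
    filter_upwards [hs.mem_nhds hw] with w' hw'
    exact h hw'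
  have hg : ∀ v : GSp m k, fderiv ℝ (fun w => fderiv ℝ φ₁ w v) z
      = fderiv ℝ (fun w => fderiv ℝ φ₂ w v) z := by
    intro v
    apply Filter.EventuallyEq.fderiv_eq
    filter_upwards [hs.mem_nhds hz] with w hw
    rw [hf w hw]
  unfold glap
  congr 1
  · exact Finset.sum_congr rfl fun i _ => by rw [hg _]
  · congr 1
    exact Finset.sum_congr rfl fun j _ => by rw [hg _]

lemma alg (uu nx K2 e gm cc a E : ℝ) (hu : 0 < uu) (hnx : 0 < nx)
    (he : e*a + 2*(cc-1) + 4*(e*gm) = e*E) :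
    (uu^e)^a * (K2 * ((nx^2)^gm * uu^(cc-1)))^2 / (nx^gm / (uu^e)^gm)^2
      = K2^2 * ((uu^e)^E * (nx^gm/(uu^e)^gm)^2) := by
  simp only [div_pow, mul_pow]
  rw [← Real.rpow_natCast (uu^(cc-1)) 2, ← Real.rpow_natCast (nx^gm) 2,
    ← Real.rpow_natCast ((nx^2)^gm) 2, ← Real.rpow_natCast ((uu^e)^gm) 2,
    ← Real.rpow_natCast nx 2]
  simp only [← Real.rpow_mul hu.le, ← Real.rpow_mul hnx.le]
  push_cast
  have h1 : nx ^ (gm*2) ≠ 0 := by positivity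
  have h2 : uu ^ (e*gm*2) ≠ 0 := by positivity
  field_simp
  rw [show (2^2*gm : ℝ) = 2*gm + 2*gm by ring, Real.rpow_add hnx,
    show e*E = e*a + (2*(cc-1) + (e*2*gm + e*2*gm)) by linarith,
    Real.rpow_add hu, Real.rpow_add hu, Real.rpow_add hu]
  ring

end S19

/-- the key computation for sharpness of the Rellich constant. -/
theorem stmt19 (γ : ℝ) (hγ : 0 < γ) (m k : ℕ) (hm : 1 ≤ m) (hk : 1 ≤ k)
    (Q : ℝ) (hQ : Q = (m : ℝ) + (1 + γ) * k) (α : ℝ) (hα : 2 < α) (hαQ : α < Q)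
    (hQα : 0 < Q + α - 4) (ε : ℝ) (hε : 0 < ε)
    (g : ℝ → ℝ)
    (hg : ∀ s : ℝ, g s = if s ≤ 1 then ((Q + α - 4) / 2 + ε) * (s - 1) + 1
      else s ^ (-((Q + α - 4) / 2 + ε))) :
    ∫ z in {z : GSp m k | 1 < grho γ z},
        grho γ z ^ α * (glap γ (fun w => g (grho γ w)) z) ^ 2 /
          (‖z.1‖ ^ γ / grho γ z ^ γ) ^ 2
      = ((Q + α - 4) / 2 + ε) ^ 2 * ((Q - α) / 2 - ε) ^ 2 *
        ∫ z in {z : GSp m k | 1 < grho γ z},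
          grho γ z ^ (-Q - 2 * ε) * (‖z.1‖ ^ γ / grho γ z ^ γ) ^ 2 := by
  have h1γ : (0:ℝ) < 1 + γ := by linarith
  set β := (Q + α - 4) / 2 + ε with hβ
  set c := -(β/(2*(1+γ))) with hc
  have hSopen : IsOpen {z : GSp m k | 1 < grho γ z} :=
    isOpen_lt continuous_const (S19.continuous_grho γ hγ)
  have hEq : Set.EqOn (fun w => g (grho γ w)) (S19.phf γ c) {z : GSp m k | 1 < grho γ z} := by
    intro w hw
    have h1 : 1 < grho γ w := hw
    have h2 : 1 < S19.uf γ w := S19.one_lt_uf hγ h1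
    simp only
    rw [hg, if_neg (not_le.2 h1), S19.grho_eq γ, ← Real.rpow_mul (S19.uf_nonneg γ w)]
    show S19.uf γ w ^ _ = S19.uf γ w ^ c
    congr 1
    rw [hc, hβ]
    ring
  have h2pc : 2*(1+γ)*c = -β := by rw [hc]; field_simp
  have hmk : (m:ℝ) + (1+γ)*k = Q := hQ.symm
  have hpt : ∀ z ∈ {z : GSp m k | 1 < grho γ z},
      grho γ z ^ α * (glap γ (fun w => g (grho γ w)) z) ^ 2 /
          (‖z.1‖ ^ γ / grho γ z ^ γ) ^ 2
        = β ^ 2 * ((Q - α) / 2 - ε) ^ 2 *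
            (grho γ z ^ (-Q - 2 * ε) * (‖z.1‖ ^ γ / grho γ z ^ γ) ^ 2) := by
    intro z hz
    by_cases hz1 : z.1 = 0
    · simp [hz1, Real.zero_rpow hγ.ne']
    · have hu1 : 1 < S19.uf γ z := S19.one_lt_uf hγ hz
      have hu0 : (0:ℝ) < S19.uf γ z := lt_trans one_pos hu1
      have hnx : (0:ℝ) < ‖z.1‖ := norm_pos_iff.mpr hz1
      have hgl : glap γ (fun w => g (grho γ w)) z = glap γ (S19.phf γ c) z :=
        S19.glap_congr hSopen hz hEq
      rw [hgl, S19.glap_phf γ hγ c z hz1]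
      have hK2 : ((2*(1+γ)*c) * (2*(1+γ)*c + m + (1+γ)*k - 2))^2
          = β ^ 2 * ((Q - α) / 2 - ε) ^ 2 := by
        rw [h2pc, hβ, ← hmk]
        ring
      rw [← hK2, S19.grho_eq γ]
      simp only [S19.Af]
      have he : (1/(2*(1+γ)))*α + 2*(c-1) + 4*((1/(2*(1+γ)))*γ) = (1/(2*(1+γ)))*(-Q-2*ε) := by
        rw [hc, hβ]
        field_simp
        ring
      exact S19.alg (S19.uf γ z) ‖z.1‖
        ((2*(1+γ)*c) * (2*(1+γ)*c + ↑m + (1+γ)*↑k - 2)) (1/(2*(1+γ))) γ c α (-Q-2*ε)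
        hu0 hnx he
  rw [MeasureTheory.setIntegral_congr_fun hSopen.measurableSet hpt,
    MeasureTheory.integral_const_mul]
end
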